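/- arXiv:1308.6539 — 2 statements merged into one kernel-verified Lean document; each statement's English description precedes it below -/
import Mathlib

section
/- Let f be a bi-Lipschitz hyperbolic homeomorphism of a compact metric space with a fixed point x, and A, B Lipschitz fiber bunched GL(d,ℝ)-cocycles with equal periodic data. With y ∈ W(x) = W^s(x) ∩ W^u(x) and p_n the periodic points of period 2n shadowing the pseudo-orbit joining f^{-n}(y) to fⁿ(y) given by the Anosov closing lemma, there exists C₇ > 0 independent of n such that ‖(Aⁿ(y))⁻¹Bⁿ(y) − (Aⁿ(p_n))⁻¹Bⁿ(p_n)‖ ≤ C₇ e^{(θ−λ)(n−n₀)} for all large n. -/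
open Filter Topology Metric Matrix
open scoped Matrix.Norms.L2Operator
noncomputable section

def cocycle {M G : Type*} [Group G] (f : M → M) (A : M → G) : ℕ → M → G
  | 0, _ => 1
  | n + 1, x => A (f^[n] x) * cocycle f A n x

def zcocycle {M G : Type*} [Group G] (f : M ≃ M) (A : M → G) : ℤ → M → G
  | Int.ofNat m, x => cocycle (⇑f) A m x
  | Int.negSucc m, x => (cocycle (⇑f) A (m + 1) ((⇑f.symm)^[m + 1] x))⁻¹

def zit {M : Type*} (f : M ≃ M) : ℤ → M → M
  | Int.ofNat m, x => (⇑f)^[m] x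
  | Int.negSucc m, x => (⇑f.symm)^[m + 1] x

def gnorm {d : ℕ} (g : GL (Fin d) ℝ) : ℝ := ‖(g : Matrix (Fin d) (Fin d) ℝ)‖

def stableSet {M : Type*} [PseudoMetricSpace M] (f : M → M) (x : M) : Set M :=
  {y | Tendsto (fun n : ℕ => dist (f^[n] x) (f^[n] y)) atTop (𝓝 0)}

def localStable {M : Type*} [PseudoMetricSpace M] (f : M → M) (ε : ℝ) (x : M) : Set M :=
  {y | ∀ n : ℕ, dist (f^[n] x) (f^[n] y) ≤ ε}

structure IsHyperbolic {M : Type*} [MetricSpace M] (f : M ≃ M) (C₁ lam ε τ : ℝ) : Prop where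
  cont : Continuous f
  cont_symm : Continuous f.symm
  C₁_pos : 0 < C₁
  lam_pos : 0 < lam
  eps_pos : 0 < ε
  tau_pos : 0 < τ
  stable_contr : ∀ x y z, y ∈ localStable (⇑f) ε x → z ∈ localStable (⇑f) ε x →
    ∀ n : ℕ, dist ((⇑f)^[n] y) ((⇑f)^[n] z) ≤ C₁ * Real.exp (-lam * n) * dist y z
  unstable_contr : ∀ x y z, y ∈ localStable (⇑f.symm) ε x → z ∈ localStable (⇑f.symm) ε x →
    ∀ n : ℕ, dist ((⇑f.symm)^[n] y) ((⇑f.symm)^[n] z) ≤ C₁ * Real.exp (-lam * n) * dist y z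
  bracket : ∃ br : M → M → M,
    ContinuousOn (fun p : M × M => br p.1 p.2) {p | dist p.1 p.2 < τ} ∧
    ∀ x y, dist x y < τ → localStable (⇑f) ε x ∩ localStable (⇑f.symm) ε y = {br x y}

def FiberBunched {M : Type*} {d : ℕ} (f : M → M) (A : M → GL (Fin d) ℝ) (θ : ℝ) : Prop :=
  ∃ C₃ > (0 : ℝ), ∀ (x : M) (n : ℕ),
    gnorm (cocycle f A n x) * gnorm ((cocycle f A n x)⁻¹) ≤ C₃ * Real.exp (θ * n)

namespace Stmt18Aux
open Finset

lemma norm_one_le (d : ℕ) : ‖(1 : Matrix (Fin d) (Fin d) ℝ)‖ ≤ 1 := by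
  rw [Matrix.l2_opNorm_def, LinearEquiv.trans_apply]
  have h1 : Matrix.toEuclideanLin (1 : Matrix (Fin d) (Fin d) ℝ) = LinearMap.id := by
    ext v i; simp [Matrix.toEuclideanLin]
  rw [h1]
  have h2 : LinearMap.toContinuousLinearMap (LinearMap.id : EuclideanSpace ℝ (Fin d) →ₗ[ℝ] _) =
      ContinuousLinearMap.id ℝ _ := by ext v; simp
  rw [h2]
  exact ContinuousLinearMap.norm_id_le

lemma cocycle_succ' {M G : Type*} [Group G] (f : M → M) (A : M → G) (n : ℕ) (x : M) :
    cocycle f A (n+1) x = cocycle f A n (f x) * A x := by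
  induction n generalizing x with
  | zero => simp [cocycle]
  | succ n ih =>
    calc cocycle f A (n+2) x = A (f^[n+1] x) * cocycle f A (n+1) x := rfl
    _ = A (f^[n+1] x) * (cocycle f A n (f x) * A x) := by rw [ih]
    _ = (A (f^[n] (f x)) * cocycle f A n (f x)) * A x := by
        rw [← Function.iterate_succ_apply f n x, mul_assoc]
    _ = cocycle f A (n+1) (f x) * A x := rfl

lemma cocycle_add {M G : Type*} [Group G] (f : M → M) (A : M → G) (m n : ℕ) (x : M) :
    cocycle f A (m + n) x = cocycle f A m (f^[n] x) * cocycle f A n x := by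
  induction m with
  | zero => simp [cocycle]
  | succ m ih =>
    have h : m + 1 + n = (m + n) + 1 := by omega
    rw [h]
    calc cocycle f A ((m+n)+1) x = A (f^[m+n] x) * cocycle f A (m+n) x := rfl
    _ = A (f^[m+n] x) * (cocycle f A m (f^[n] x) * cocycle f A n x) := by rw [ih]
    _ = (A (f^[m] (f^[n] x)) * cocycle f A m (f^[n] x)) * cocycle f A n x := by
        rw [Function.iterate_add_apply, mul_assoc]
    _ = cocycle f A (m+1) (f^[n] x) * cocycle f A n x := rfl

lemma cocycle_one {M : Type*} {d : ℕ} (f : M → M) (A : M → GL (Fin d) ℝ) (z : M) :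
    cocycle f A 1 z = A z := by
  show A (f^[0] z) * cocycle f A 0 z = A z
  show A z * 1 = A z
  exact mul_one _

lemma iter_cancel {M : Type*} (f : M ≃ M) (n : ℕ) (z : M) :
    (⇑f)^[n] ((⇑f.symm)^[n] z) = z := by
  induction n generalizing z with
  | zero => rfl
  | succ n ih =>
    rw [Function.iterate_succ_apply' (⇑f.symm) n z, Function.iterate_succ_apply (⇑f) n,
      f.apply_symm_apply]
    exact ih z

lemma iter_cancel' {M : Type*} (f : M ≃ M) (n : ℕ) (z : M) :
    (⇑f.symm)^[n] ((⇑f)^[n] z) = z := by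
  induction n generalizing z with
  | zero => rfl
  | succ n ih =>
    rw [Function.iterate_succ_apply' (⇑f) n z, Function.iterate_succ_apply (⇑f.symm) n,
      f.symm_apply_apply]
    exact ih z

lemma iter_mix {M : Type*} (f : M ≃ M) (n k : ℕ) (z : M) :
    (⇑f)^[n + k] ((⇑f.symm)^[n] z) = (⇑f)^[k] z := by
  rw [add_comm, Function.iterate_add_apply, iter_cancel]

lemma geom_le (s : ℝ) (h0 : 0 ≤ s) (h1 : s < 1) (n : ℕ) :
    ∑ k ∈ range n, s ^ k ≤ (1 - s)⁻¹ := by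
  rw [geom_sum_eq h1.ne]
  have hs : 0 < 1 - s := by linarith
  have h2 : (s ^ n - 1)/(s - 1) = (1 - s ^ n)/(1 - s) := by
    rw [← neg_div_neg_eq]; ring_nf
  rw [h2, ← one_div (1 - s)]
  have h3 : (0:ℝ) ≤ s ^ n := pow_nonneg h0 n
  gcongr
  linarith

lemma sum_reflect_le (s : ℝ) (h0 : 0 ≤ s) (h1 : s < 1) (n : ℕ) :
    ∑ k ∈ range n, s ^ (n - k) ≤ (1 - s)⁻¹ := by
  rw [← Finset.sum_range_reflect]
  refine le_trans (Finset.sum_le_sum ?_) (geom_le s h0 h1 n)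
  intro k hk
  rw [mem_range] at hk
  have h : n - (n - 1 - k) = k + 1 := by omega
  rw [h]
  exact pow_le_pow_of_le_one h0 h1.le (Nat.le_succ k)

lemma exp_sub_one_le (s m : ℝ) (h0 : 0 ≤ s) (hm : s ≤ m) :
    Real.exp s - 1 ≤ Real.exp m * s := by
  have h1 : -s + 1 ≤ Real.exp (-s) := Real.add_one_le_exp (-s)
  have h2 : Real.exp s * Real.exp (-s) = 1 := by rw [← Real.exp_add]; simp
  have h3 : Real.exp s ≤ Real.exp m := Real.exp_le_exp.mpr hm
  nlinarith [Real.exp_pos s, Real.exp_pos m,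
    mul_le_mul_of_nonneg_left h1 (Real.exp_pos s).le,
    mul_le_mul_of_nonneg_left h3 h0]

lemma sum2 (θ δ : ℝ) (hδ : 0 < δ) (n : ℕ) :
    ∑ k ∈ range n, Real.exp (θ * k) * Real.exp (-(θ + δ) * (k:ℝ))
      ≤ (1 - Real.exp (-δ))⁻¹ := by
  have hlt : Real.exp (-δ) < 1 := by
    rw [← Real.exp_zero]; exact Real.exp_lt_exp.mpr (by linarith)
  refine le_trans (le_of_eq (Finset.sum_congr rfl fun k _ => ?_))
    (geom_le (Real.exp (-δ)) (Real.exp_pos _).le hlt n)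
  rw [← Real.exp_nat_mul, ← Real.exp_add]
  congr 1; ring

lemma sum1 (θ δ : ℝ) (hθ : 0 ≤ θ) (hδ : 0 < δ) (n : ℕ) :
    ∑ k ∈ range n, Real.exp (θ * k) * Real.exp (-(θ + δ) * ((n - k : ℕ):ℝ))
      ≤ Real.exp (θ * n) * (1 - Real.exp (-δ))⁻¹ := by
  have hlt : Real.exp (-δ) < 1 := by
    rw [← Real.exp_zero]; exact Real.exp_lt_exp.mpr (by linarith)
  have hterm : ∀ k ∈ range n, Real.exp (θ * k) * Real.exp (-(θ + δ) * ((n - k : ℕ):ℝ))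
      ≤ Real.exp (θ * n) * Real.exp (-δ) ^ (n - k) := by
    intro k hk
    rw [mem_range] at hk
    have hcast : ((n - k : ℕ):ℝ) = (n:ℝ) - k := by
      rw [Nat.cast_sub hk.le]
    rw [← Real.exp_nat_mul, ← Real.exp_add, ← Real.exp_add, hcast]
    apply Real.exp_le_exp.mpr
    have hkn : (k:ℝ) ≤ (n:ℝ) := by exact_mod_cast hk.le
    nlinarith [hkn]
  refine le_trans (Finset.sum_le_sum hterm) ?_
  rw [← Finset.mul_sum]
  exact mul_le_mul_of_nonneg_left (sum_reflect_le _ (Real.exp_pos _).le hlt n)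
    (Real.exp_pos _).le

lemma sum3 (c : ℝ) (hc : c < 0) (n : ℕ) :
    ∑ k ∈ range n, Real.exp (c * k) ≤ (1 - Real.exp c)⁻¹ := by
  have hlt : Real.exp c < 1 := by
    rw [← Real.exp_zero]; exact Real.exp_lt_exp.mpr hc
  refine le_trans (le_of_eq (Finset.sum_congr rfl fun k _ => ?_))
    (geom_le (Real.exp c) (Real.exp_pos _).le hlt n)
  rw [← Real.exp_nat_mul, mul_comm]

set_option maxHeartbeats 1000000 in
lemma tele {M : Type*} [MetricSpace M] {d : ℕ} (f : M → M) (A : M → GL (Fin d) ℝ)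
    (C₃ a' L θ : ℝ) (hC₃0 : 0 ≤ C₃) (ha'0 : 0 ≤ a') (hL0 : 0 ≤ L)
    (hFB : ∀ z m, gnorm (cocycle f A m z) * gnorm ((cocycle f A m z)⁻¹) ≤ C₃ * Real.exp (θ * m))
    (ha' : ∀ z, gnorm ((A z)⁻¹) ≤ a')
    (hLip : ∀ u v : M, ‖((A u : Matrix (Fin d) (Fin d) ℝ)) - ((A v : Matrix (Fin d) (Fin d) ℝ))‖
      ≤ L * dist u v)
    (u v : M) (r : ℕ → ℝ) (hr : ∀ k, 0 ≤ r k) :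
    ∀ n : ℕ, (∀ k < n, dist (f^[k] u) (f^[k] v) ≤ r k) →
    ‖((((cocycle f A n u)⁻¹ * cocycle f A n v : GL (Fin d) ℝ)) : Matrix (Fin d) (Fin d) ℝ) - 1‖ + 1
      ≤ Real.exp (∑ k ∈ Finset.range n, a' * C₃ * L * Real.exp (θ * k) * r k) := by
  intro n
  induction n with
  | zero => intro _; simp [cocycle]
  | succ n ih =>
    intro hd
    have IH := ih (fun k hk => hd k (by omega))
    set Cu := cocycle f A n u with hCu
    set Cv := cocycle f A n v with hCv
    set au := A (f^[n] u) with hau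
    set av := A (f^[n] v) with hav
    have hglu : cocycle f A (n+1) u = au * Cu := rfl
    have hglv : cocycle f A (n+1) v = av * Cv := rfl
    have hgl : (cocycle f A (n+1) u)⁻¹ * cocycle f A (n+1) v
        = Cu⁻¹ * (au⁻¹ * (av * Cv)) := by
      rw [hglu, hglv]; group
    have h1 : ((au⁻¹ : GL (Fin d) ℝ) : Matrix (Fin d) (Fin d) ℝ) * (au : Matrix (Fin d) (Fin d) ℝ)
        = 1 := by
      rw [← Units.val_mul, inv_mul_cancel, Units.val_one]
    have hmat : (((Cu⁻¹ * (au⁻¹ * (av * Cv)) : GL (Fin d) ℝ)) : Matrix (Fin d) (Fin d) ℝ)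
        = ((Cu⁻¹ * Cv : GL (Fin d) ℝ) : Matrix (Fin d) (Fin d) ℝ)
          + ((Cu⁻¹ : GL (Fin d) ℝ) : Matrix (Fin d) (Fin d) ℝ)
            * (((au⁻¹ : GL (Fin d) ℝ) : Matrix (Fin d) (Fin d) ℝ)
              * (((av : GL (Fin d) ℝ) : Matrix (Fin d) (Fin d) ℝ) - (au : Matrix (Fin d) (Fin d) ℝ)))
            * ((Cv : GL (Fin d) ℝ) : Matrix (Fin d) (Fin d) ℝ) := by
      simp only [Units.val_mul]
      have expand : ((au⁻¹ : GL (Fin d) ℝ) : Matrix (Fin d) (Fin d) ℝ)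
          * (((av : GL (Fin d) ℝ) : Matrix (Fin d) (Fin d) ℝ) - (au : Matrix (Fin d) (Fin d) ℝ))
          = ((au⁻¹ : GL (Fin d) ℝ) : Matrix (Fin d) (Fin d) ℝ) * (av : Matrix (Fin d) (Fin d) ℝ)
            - 1 := by
        rw [mul_sub, h1]
      rw [expand]
      noncomm_ring
    set e := ‖((Cu⁻¹ * Cv : GL (Fin d) ℝ) : Matrix (Fin d) (Fin d) ℝ) - 1‖ with he
    have he0 : 0 ≤ e := norm_nonneg _
    set g := a' * C₃ * L * Real.exp (θ * n) * r n with hgdef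
    have hg0 : 0 ≤ g := by
      apply mul_nonneg (mul_nonneg (mul_nonneg (mul_nonneg ha'0 hC₃0) hL0) (Real.exp_pos _).le)
        (hr n)
    have hCvval : ((Cv : GL (Fin d) ℝ) : Matrix (Fin d) (Fin d) ℝ)
        = ((Cu : GL (Fin d) ℝ) : Matrix (Fin d) (Fin d) ℝ)
          * ((Cu⁻¹ * Cv : GL (Fin d) ℝ) : Matrix (Fin d) (Fin d) ℝ) := by
      rw [← Units.val_mul, mul_inv_cancel_left]
    have hS : ‖((Cu⁻¹ * Cv : GL (Fin d) ℝ) : Matrix (Fin d) (Fin d) ℝ)‖ ≤ 1 + e := by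
      calc ‖((Cu⁻¹ * Cv : GL (Fin d) ℝ) : Matrix (Fin d) (Fin d) ℝ)‖
          = ‖(1 : Matrix (Fin d) (Fin d) ℝ)
            + (((Cu⁻¹ * Cv : GL (Fin d) ℝ) : Matrix (Fin d) (Fin d) ℝ) - 1)‖ := by
            congr 1; abel
        _ ≤ ‖(1 : Matrix (Fin d) (Fin d) ℝ)‖
            + ‖((Cu⁻¹ * Cv : GL (Fin d) ℝ) : Matrix (Fin d) (Fin d) ℝ) - 1‖ := norm_add_le _ _
        _ ≤ 1 + e := by have := norm_one_le d; rw [← he]; linarith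
    have hCvnorm : ‖((Cv : GL (Fin d) ℝ) : Matrix (Fin d) (Fin d) ℝ)‖
        ≤ ‖((Cu : GL (Fin d) ℝ) : Matrix (Fin d) (Fin d) ℝ)‖ * (1 + e) := by
      rw [hCvval]
      exact le_trans (norm_mul_le _ _) (mul_le_mul_of_nonneg_left hS (norm_nonneg _))
    have hA1 : ‖((au⁻¹ : GL (Fin d) ℝ) : Matrix (Fin d) (Fin d) ℝ)
        * (((av : GL (Fin d) ℝ) : Matrix (Fin d) (Fin d) ℝ) - (au : Matrix (Fin d) (Fin d) ℝ))‖
        ≤ a' * (L * r n) := by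
      refine le_trans (norm_mul_le _ _) ?_
      have h7 : ‖((av : GL (Fin d) ℝ) : Matrix (Fin d) (Fin d) ℝ)
          - (au : Matrix (Fin d) (Fin d) ℝ)‖ ≤ L * r n := by
        refine le_trans (hLip (f^[n] v) (f^[n] u)) ?_
        rw [dist_comm]
        exact mul_le_mul_of_nonneg_left (hd n (by omega)) hL0
      exact mul_le_mul (ha' _) h7 (norm_nonneg _) ha'0
    have hfb := hFB u n
    have hterm : ‖((Cu⁻¹ : GL (Fin d) ℝ) : Matrix (Fin d) (Fin d) ℝ)
        * (((au⁻¹ : GL (Fin d) ℝ) : Matrix (Fin d) (Fin d) ℝ)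
          * (((av : GL (Fin d) ℝ) : Matrix (Fin d) (Fin d) ℝ) - (au : Matrix (Fin d) (Fin d) ℝ)))
        * ((Cv : GL (Fin d) ℝ) : Matrix (Fin d) (Fin d) ℝ)‖ ≤ g * (1 + e) := by
      have step1 : ‖((Cu⁻¹ : GL (Fin d) ℝ) : Matrix (Fin d) (Fin d) ℝ)
          * (((au⁻¹ : GL (Fin d) ℝ) : Matrix (Fin d) (Fin d) ℝ)
            * (((av : GL (Fin d) ℝ) : Matrix (Fin d) (Fin d) ℝ) - (au : Matrix (Fin d) (Fin d) ℝ)))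
          * ((Cv : GL (Fin d) ℝ) : Matrix (Fin d) (Fin d) ℝ)‖
          ≤ (‖((Cu⁻¹ : GL (Fin d) ℝ) : Matrix (Fin d) (Fin d) ℝ)‖ * (a' * (L * r n)))
            * (‖((Cu : GL (Fin d) ℝ) : Matrix (Fin d) (Fin d) ℝ)‖ * (1 + e)) := by
        refine le_trans (norm_mul_le _ _) ?_
        refine mul_le_mul ?_ hCvnorm (norm_nonneg _) ?_
        · refine le_trans (norm_mul_le _ _) ?_
          exact mul_le_mul_of_nonneg_left hA1 (norm_nonneg _)
        · have h8 : (0:ℝ) ≤ a' * (L * r n) := by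
            apply mul_nonneg ha'0 (mul_nonneg hL0 (hr n))
          exact mul_nonneg (norm_nonneg _) h8
      refine le_trans step1 ?_
      have heq : (‖((Cu⁻¹ : GL (Fin d) ℝ) : Matrix (Fin d) (Fin d) ℝ)‖ * (a' * (L * r n)))
          * (‖((Cu : GL (Fin d) ℝ) : Matrix (Fin d) (Fin d) ℝ)‖ * (1 + e))
          = (gnorm Cu * gnorm Cu⁻¹) * (a' * L * r n * (1 + e)) := by
        simp only [gnorm]; ring
      rw [heq]
      have h9 : (0:ℝ) ≤ a' * L * r n * (1 + e) := by
        apply mul_nonneg (mul_nonneg (mul_nonneg ha'0 hL0) (hr n))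
        linarith
      calc (gnorm Cu * gnorm Cu⁻¹) * (a' * L * r n * (1 + e))
          ≤ (C₃ * Real.exp (θ * n)) * (a' * L * r n * (1 + e)) :=
            mul_le_mul_of_nonneg_right hfb h9
        _ = g * (1 + e) := by rw [hgdef]; ring
    have hnorm1 : ‖((((cocycle f A (n+1) u)⁻¹ * cocycle f A (n+1) v : GL (Fin d) ℝ))
        : Matrix (Fin d) (Fin d) ℝ) - 1‖ ≤ e + g * (1 + e) := by
      rw [hgl, hmat]
      have h10 : ((Cu⁻¹ * Cv : GL (Fin d) ℝ) : Matrix (Fin d) (Fin d) ℝ)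
          + ((Cu⁻¹ : GL (Fin d) ℝ) : Matrix (Fin d) (Fin d) ℝ)
            * (((au⁻¹ : GL (Fin d) ℝ) : Matrix (Fin d) (Fin d) ℝ)
              * (((av : GL (Fin d) ℝ) : Matrix (Fin d) (Fin d) ℝ) - (au : Matrix (Fin d) (Fin d) ℝ)))
            * ((Cv : GL (Fin d) ℝ) : Matrix (Fin d) (Fin d) ℝ) - 1
          = (((Cu⁻¹ * Cv : GL (Fin d) ℝ) : Matrix (Fin d) (Fin d) ℝ) - 1)
            + ((Cu⁻¹ : GL (Fin d) ℝ) : Matrix (Fin d) (Fin d) ℝ)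
            * (((au⁻¹ : GL (Fin d) ℝ) : Matrix (Fin d) (Fin d) ℝ)
              * (((av : GL (Fin d) ℝ) : Matrix (Fin d) (Fin d) ℝ) - (au : Matrix (Fin d) (Fin d) ℝ)))
            * ((Cv : GL (Fin d) ℝ) : Matrix (Fin d) (Fin d) ℝ) := by abel
      rw [h10]
      exact le_trans (norm_add_le _ _) (by rw [← he]; linarith [hterm])
    have hsum : ∑ k ∈ Finset.range (n+1), a' * C₃ * L * Real.exp (θ * k) * r k
        = (∑ k ∈ Finset.range n, a' * C₃ * L * Real.exp (θ * k) * r k) + g := by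
      rw [Finset.sum_range_succ, hgdef]
    rw [hsum, Real.exp_add]
    have h1g : (1:ℝ) + g ≤ Real.exp g := by linarith [Real.add_one_le_exp g]
    have hexp0 : (0:ℝ) < Real.exp (∑ k ∈ Finset.range n, a' * C₃ * L * Real.exp (θ * k) * r k) :=
      Real.exp_pos _
    nlinarith [IH, mul_le_mul IH h1g (by linarith) hexp0.le]

end Stmt18Aux

set_option maxHeartbeats 4000000 in
/-- comparison of `(Aⁿ)⁻¹Bⁿ` along `y ∈ W(x)` and along the shadowing periodic
points `p_n` of period `2n`: `‖(Aⁿ(y))⁻¹Bⁿ(y) − (Aⁿ(p_n))⁻¹Bⁿ(p_n)‖ ≤ C₇ e^{(θ−λ)(n−n₀)}`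
for all large `n`, with `C₇` independent of `n`. -/
theorem stmt18 {M : Type*} [MetricSpace M] [CompactSpace M] {d : ℕ}
    (f : M ≃ M) (C₁ lam ε τ : ℝ) (hf : IsHyperbolic f C₁ lam ε τ)
    (hbil : ∃ K : NNReal, LipschitzWith K ⇑f ∧ LipschitzWith K ⇑f.symm)
    (x : M) (hx : f x = x)
    (A B : M → GL (Fin d) ℝ)
    (hA : ∃ K : NNReal, LipschitzWith K fun x => (A x : Matrix (Fin d) (Fin d) ℝ))
    (hB : ∃ K : NNReal, LipschitzWith K fun x => (B x : Matrix (Fin d) (Fin d) ℝ))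
    (θ : ℝ) (hθ0 : 0 < θ) (hθ : θ < lam)
    (hFA : FiberBunched (⇑f) A θ) (hFB : FiberBunched (⇑f) B θ)
    (hper : ∀ (p : M) (m : ℕ), 0 < m → (⇑f)^[m] p = p →
      cocycle (⇑f) A m p = cocycle (⇑f) B m p)
    (y : M) (hy : y ∈ stableSet (⇑f) x ∩ stableSet (⇑f.symm) x)
    (δ : ℝ) (hδ : 0 < δ) (hθδ : θ + δ < lam)
    (C₅ C₆ : ℝ) (hC₅ : 0 < C₅) (hC₆ : 0 < C₆) (n₀ : ℕ)
    (hD : ∀ n ≥ n₀, dist ((⇑f.symm)^[n] y) ((⇑f)^[n] y) ≤ C₆ * Real.exp (-lam * ((n : ℝ) - n₀)))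
    (p : ℕ → M)
    (hp : ∀ n : ℕ, (⇑f)^[2 * n] (p n) = p n ∧ ∀ j ≤ 2 * n,
      dist ((⇑f)^[j] ((⇑f.symm)^[n] (p n))) ((⇑f)^[j] ((⇑f.symm)^[n] y)) ≤
        C₅ * Real.exp (-(θ + δ) * (↑(min j (2 * n - j)) : ℝ)) *
          dist ((⇑f.symm)^[n] y) ((⇑f)^[n] y)) :
    ∃ C₇ > (0 : ℝ), ∃ n₁ : ℕ, ∀ n ≥ n₁,
      ‖((((cocycle (⇑f) A n y)⁻¹ * cocycle (⇑f) B n y : GL (Fin d) ℝ)) :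
          Matrix (Fin d) (Fin d) ℝ) -
        ((((cocycle (⇑f) A n (p n))⁻¹ * cocycle (⇑f) B n (p n) : GL (Fin d) ℝ)) :
          Matrix (Fin d) (Fin d) ℝ)‖ ≤ C₇ * Real.exp ((θ - lam) * ((n : ℝ) - n₀)) := by
  classical
  obtain ⟨KA, hLA⟩ := hA
  obtain ⟨KB, hLB⟩ := hB
  obtain ⟨CA₃, hCA₃pos, hFA'⟩ := hFA
  obtain ⟨CB₃, hCB₃pos, hFB'⟩ := hFB
  have hLipA : ∀ u v : M, ‖((A u : Matrix (Fin d) (Fin d) ℝ)) - (A v : Matrix (Fin d) (Fin d) ℝ)‖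
      ≤ (KA:ℝ) * dist u v := by
    intro u v; rw [← dist_eq_norm]; exact hLA.dist_le_mul u v
  have hLipB : ∀ u v : M, ‖((B u : Matrix (Fin d) (Fin d) ℝ)) - (B v : Matrix (Fin d) (Fin d) ℝ)‖
      ≤ (KB:ℝ) * dist u v := by
    intro u v; rw [← dist_eq_norm]; exact hLB.dist_le_mul u v
  have hLA0 : (0:ℝ) ≤ (KA:ℝ) := KA.coe_nonneg
  have hLB0 : (0:ℝ) ≤ (KB:ℝ) := KB.coe_nonneg
  -- A x = B x
  have hfx1 : (⇑f)^[1] x = x := by simp [hx]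
  have hABx : A x = B x := by
    have h := hper x 1 one_pos hfx1
    rwa [Stmt18Aux.cocycle_one, Stmt18Aux.cocycle_one] at h
  -- fixed point iterates
  have hxs : f.symm x = x := by
    have h := f.symm_apply_apply x
    rwa [hx] at h
  have hxit : ∀ m : ℕ, (⇑f.symm)^[m] x = x := by
    intro m
    induction m with
    | zero => rfl
    | succ m ih => rw [Function.iterate_succ_apply' (⇑f.symm) m x, ih, hxs]
  -- sup bounds for inverses
  have hconA : Continuous fun z : M => ((A z : Matrix (Fin d) (Fin d) ℝ)) := hLA.continuous
  have hconB : Continuous fun z : M => ((B z : Matrix (Fin d) (Fin d) ℝ)) := hLB.continuous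
  have hcontAinv : Continuous fun z : M => (((A z)⁻¹ : GL (Fin d) ℝ) : Matrix (Fin d) (Fin d) ℝ) := by
    have heq : (fun z : M => (((A z)⁻¹ : GL (Fin d) ℝ) : Matrix (Fin d) (Fin d) ℝ))
        = fun z : M => Ring.inverse ((A z : Matrix (Fin d) (Fin d) ℝ)) := by
      funext z; rw [Ring.inverse_unit]
    rw [heq]
    exact continuous_iff_continuousAt.mpr fun z =>
      ContinuousAt.comp (f := fun z : M => ((A z : Matrix (Fin d) (Fin d) ℝ)))
        (NormedRing.inverse_continuousAt (A z)) hconA.continuousAt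
  have hcontBinv : Continuous fun z : M => (((B z)⁻¹ : GL (Fin d) ℝ) : Matrix (Fin d) (Fin d) ℝ) := by
    have heq : (fun z : M => (((B z)⁻¹ : GL (Fin d) ℝ) : Matrix (Fin d) (Fin d) ℝ))
        = fun z : M => Ring.inverse ((B z : Matrix (Fin d) (Fin d) ℝ)) := by
      funext z; rw [Ring.inverse_unit]
    rw [heq]
    exact continuous_iff_continuousAt.mpr fun z =>
      ContinuousAt.comp (f := fun z : M => ((B z : Matrix (Fin d) (Fin d) ℝ)))
        (NormedRing.inverse_continuousAt (B z)) hconB.continuousAt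
  obtain ⟨zA, -, hzA⟩ := (isCompact_univ : IsCompact (Set.univ : Set M)).exists_isMaxOn
    ⟨y, Set.mem_univ y⟩ hcontAinv.norm.continuousOn
  obtain ⟨zB, -, hzB⟩ := (isCompact_univ : IsCompact (Set.univ : Set M)).exists_isMaxOn
    ⟨y, Set.mem_univ y⟩ hcontBinv.norm.continuousOn
  set aA' := ‖(((A zA)⁻¹ : GL (Fin d) ℝ) : Matrix (Fin d) (Fin d) ℝ)‖ with haA'def
  set aB' := ‖(((B zB)⁻¹ : GL (Fin d) ℝ) : Matrix (Fin d) (Fin d) ℝ)‖ with haB'def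
  have haA' : ∀ z : M, gnorm ((A z)⁻¹) ≤ aA' := fun z => hzA (Set.mem_univ z)
  have haB' : ∀ z : M, gnorm ((B z)⁻¹) ≤ aB' := fun z => hzB (Set.mem_univ z)
  have haA'0 : 0 ≤ aA' := norm_nonneg _
  have haB'0 : 0 ≤ aB' := norm_nonneg _
  -- backward distance decay
  have hyun := hy.2
  have hyd : Tendsto (fun n : ℕ => dist x ((⇑f.symm)^[n] y)) atTop (𝓝 0) := by
    have heq : (fun n : ℕ => dist ((⇑f.symm)^[n] x) ((⇑f.symm)^[n] y))
        = fun n : ℕ => dist x ((⇑f.symm)^[n] y) := by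
      funext n; rw [hxit n]
    have h := hyun
    rw [stableSet, Set.mem_setOf_eq, heq] at h
    exact h
  obtain ⟨m₁, hm₁⟩ := (Metric.tendsto_atTop.mp hyd) ε hf.eps_pos
  have hm₁' : ∀ m, m₁ ≤ m → dist x ((⇑f.symm)^[m] y) ≤ ε := by
    intro m hm
    have h := hm₁ m hm
    rw [dist_zero_right, Real.norm_eq_abs, abs_of_nonneg dist_nonneg] at h
    exact h.le
  set v0 := (⇑f.symm)^[m₁] y with hv0def
  have hv0 : v0 ∈ localStable (⇑f.symm) ε x := by
    intro k
    rw [hxit k]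
    have h : (⇑f.symm)^[k] v0 = (⇑f.symm)^[k + m₁] y := by
      rw [hv0def, ← Function.iterate_add_apply]
    rw [h]
    exact hm₁' (k + m₁) (by omega)
  have hxls : x ∈ localStable (⇑f.symm) ε x := by
    intro k; rw [hxit k]; simpa using hf.eps_pos.le
  have hcontr := hf.unstable_contr x x v0 hxls hv0
  obtain ⟨Dm, hDm⟩ := Metric.isBounded_iff.mp
    (isCompact_univ : IsCompact (Set.univ : Set M)).isBounded
  have hDm' : ∀ a b : M, dist a b ≤ Dm := fun a b => hDm (Set.mem_univ a) (Set.mem_univ b)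
  have hDm0 : (0:ℝ) ≤ Dm := le_trans dist_nonneg (hDm' x x)
  set Cu := (C₁ * dist x v0 + Dm + 1) * Real.exp (lam * m₁) with hCudef
  have hCubase : (0:ℝ) < C₁ * dist x v0 + Dm + 1 := by
    have := hf.C₁_pos
    have := dist_nonneg (x := x) (y := v0)
    nlinarith
  have hCu0 : (0:ℝ) < Cu := mul_pos hCubase (Real.exp_pos _)
  have hCu : ∀ m : ℕ, dist x ((⇑f.symm)^[m] y) ≤ Cu * Real.exp (-lam * m) := by
    intro m
    rcases le_or_gt m₁ m with hm | hm
    · have h := hcontr (m - m₁)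
      rw [hxit] at h
      have h2 : (⇑f.symm)^[m - m₁] v0 = (⇑f.symm)^[m] y := by
        rw [hv0def, ← Function.iterate_add_apply]
        congr 1
        omega
      rw [h2] at h
      refine le_trans h ?_
      have hc : ((m - m₁ : ℕ):ℝ) = (m:ℝ) - m₁ := by
        rw [Nat.cast_sub hm]
      rw [hc, hCudef]
      have hexp : Real.exp (-lam * ((m:ℝ) - m₁))
          = Real.exp (lam * m₁) * Real.exp (-lam * m) := by
        rw [← Real.exp_add]; ring_nf
      rw [hexp]
      have he1 : (0:ℝ) < Real.exp (lam * m₁) * Real.exp (-lam * m) :=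
        mul_pos (Real.exp_pos _) (Real.exp_pos _)
      have hd0 : (0:ℝ) ≤ dist x v0 := dist_nonneg
      nlinarith [hf.C₁_pos]
    · refine le_trans (hDm' x _) ?_
      have hge1 : (1:ℝ) ≤ Real.exp (lam * m₁) * Real.exp (-lam * m) := by
        rw [← Real.exp_add, ← Real.exp_zero]
        apply Real.exp_le_exp.mpr
        have hmc : (m:ℝ) ≤ (m₁:ℝ) := by exact_mod_cast hm.le
        nlinarith [hf.lam_pos]
      have h3 := mul_le_mul_of_nonneg_left hge1 hCubase.le
      rw [hCudef]
      have h4 : Dm ≤ C₁ * dist x v0 + Dm + 1 := by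
        nlinarith [hf.C₁_pos, dist_nonneg (x := x) (y := v0)]
      nlinarith
  -- uniform bound on P_n = Aⁿ(z n) * (Bⁿ(z n))⁻¹
  set z : ℕ → M := fun n => (⇑f.symm)^[n] y with hzdef
  set q : ℕ → ℝ := fun n => ‖(((cocycle (⇑f) A n (z n)) * (cocycle (⇑f) B n (z n))⁻¹
    : GL (Fin d) ℝ) : Matrix (Fin d) (Fin d) ℝ)‖ with hqdef
  set c := CA₃ * aB' * ((KA:ℝ) + (KB:ℝ)) * Cu with hcdef
  have hc0 : 0 ≤ c := by
    apply mul_nonneg (mul_nonneg (mul_nonneg hCA₃pos.le haB'0) (by linarith)) hCu0.le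
  have hq0 : ∀ n, 0 ≤ q n := fun n => norm_nonneg _
  have hqrec : ∀ n : ℕ, q (n+1) ≤ q n * (1 + c * Real.exp ((θ - lam) * n)) := by
    intro n
    have hzsucc : f (z (n+1)) = z n := by
      show f ((⇑f.symm)^[n+1] y) = (⇑f.symm)^[n] y
      rw [Function.iterate_succ_apply' (⇑f.symm) n y]
      exact f.apply_symm_apply _
    set u := z (n+1) with hudef
    set CA := cocycle (⇑f) A n (z n) with hCAdef
    set CB := cocycle (⇑f) B n (z n) with hCBdef
    have hqn : q n = ‖((CA * CB⁻¹ : GL (Fin d) ℝ) : Matrix (Fin d) (Fin d) ℝ)‖ := rfl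
    have hcoA : cocycle (⇑f) A (n+1) u = CA * A u := by
      rw [Stmt18Aux.cocycle_succ', hzsucc]
    have hcoB : cocycle (⇑f) B (n+1) u = CB * B u := by
      rw [Stmt18Aux.cocycle_succ', hzsucc]
    have hgl : cocycle (⇑f) A (n+1) u * (cocycle (⇑f) B (n+1) u)⁻¹
        = CA * ((A u * (B u)⁻¹) * CB⁻¹) := by
      rw [hcoA, hcoB]; group
    have hBu1 : ((B u : Matrix (Fin d) (Fin d) ℝ))
        * (((B u)⁻¹ : GL (Fin d) ℝ) : Matrix (Fin d) (Fin d) ℝ) = 1 := by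
      rw [← Units.val_mul, mul_inv_cancel, Units.val_one]
    have hmat : ((CA * ((A u * (B u)⁻¹) * CB⁻¹) : GL (Fin d) ℝ) : Matrix (Fin d) (Fin d) ℝ)
        = ((CA * CB⁻¹ : GL (Fin d) ℝ) : Matrix (Fin d) (Fin d) ℝ)
          + ((CA : GL (Fin d) ℝ) : Matrix (Fin d) (Fin d) ℝ)
            * (((A u : Matrix (Fin d) (Fin d) ℝ) - (B u : Matrix (Fin d) (Fin d) ℝ))
              * (((B u)⁻¹ : GL (Fin d) ℝ) : Matrix (Fin d) (Fin d) ℝ))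
            * ((CB⁻¹ : GL (Fin d) ℝ) : Matrix (Fin d) (Fin d) ℝ) := by
      simp only [Units.val_mul]
      have expand : ((A u : Matrix (Fin d) (Fin d) ℝ) - (B u : Matrix (Fin d) (Fin d) ℝ))
          * (((B u)⁻¹ : GL (Fin d) ℝ) : Matrix (Fin d) (Fin d) ℝ)
          = (A u : Matrix (Fin d) (Fin d) ℝ)
            * (((B u)⁻¹ : GL (Fin d) ℝ) : Matrix (Fin d) (Fin d) ℝ) - 1 := by
        rw [sub_mul, hBu1]
      rw [expand]
      noncomm_ring
    have hABu : ‖(A u : Matrix (Fin d) (Fin d) ℝ) - (B u : Matrix (Fin d) (Fin d) ℝ)‖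
        ≤ ((KA:ℝ) + (KB:ℝ)) * dist u x := by
      have hsplit : (A u : Matrix (Fin d) (Fin d) ℝ) - (B u : Matrix (Fin d) (Fin d) ℝ)
          = ((A u : Matrix (Fin d) (Fin d) ℝ) - (A x : Matrix (Fin d) (Fin d) ℝ))
            + ((B x : Matrix (Fin d) (Fin d) ℝ) - (B u : Matrix (Fin d) (Fin d) ℝ)) := by
        rw [hABx]; abel
      rw [hsplit]
      refine le_trans (norm_add_le _ _) ?_
      have h1 := hLipA u x
      have h2 := hLipB x u
      rw [dist_comm x u] at h2
      have h3 : ((KA:ℝ) + (KB:ℝ)) * dist u x = (KA:ℝ) * dist u x + (KB:ℝ) * dist u x := by ring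
      linarith
    have hdux : dist u x ≤ Cu * Real.exp (-lam * ((n:ℝ)+1)) := by
      rw [dist_comm]
      have h := hCu (n+1)
      have hcast : ((n+1 : ℕ):ℝ) = (n:ℝ) + 1 := by push_cast; ring
      rwa [hcast] at h
    have hdux0 : 0 ≤ dist u x := dist_nonneg
    have hCBinv : ‖((CB⁻¹ : GL (Fin d) ℝ) : Matrix (Fin d) (Fin d) ℝ)‖
        ≤ ‖((CA⁻¹ : GL (Fin d) ℝ) : Matrix (Fin d) (Fin d) ℝ)‖ * q n := by
      have hval : ((CB⁻¹ : GL (Fin d) ℝ) : Matrix (Fin d) (Fin d) ℝ)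
          = ((CA⁻¹ : GL (Fin d) ℝ) : Matrix (Fin d) (Fin d) ℝ)
            * ((CA * CB⁻¹ : GL (Fin d) ℝ) : Matrix (Fin d) (Fin d) ℝ) := by
        rw [← Units.val_mul, inv_mul_cancel_left]
      rw [hval, hqn]
      exact norm_mul_le _ _
    have hterm : ‖((CA : GL (Fin d) ℝ) : Matrix (Fin d) (Fin d) ℝ)
        * (((A u : Matrix (Fin d) (Fin d) ℝ) - (B u : Matrix (Fin d) (Fin d) ℝ))
          * (((B u)⁻¹ : GL (Fin d) ℝ) : Matrix (Fin d) (Fin d) ℝ))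
        * ((CB⁻¹ : GL (Fin d) ℝ) : Matrix (Fin d) (Fin d) ℝ)‖
        ≤ q n * (c * Real.exp ((θ - lam) * n)) := by
      have hmid : ‖((A u : Matrix (Fin d) (Fin d) ℝ) - (B u : Matrix (Fin d) (Fin d) ℝ))
          * (((B u)⁻¹ : GL (Fin d) ℝ) : Matrix (Fin d) (Fin d) ℝ)‖
          ≤ ((KA:ℝ) + (KB:ℝ)) * dist u x * aB' := by
        refine le_trans (norm_mul_le _ _) ?_
        exact mul_le_mul hABu (haB' u) (norm_nonneg _)
          (mul_nonneg (by linarith) hdux0)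
      have step1 : ‖((CA : GL (Fin d) ℝ) : Matrix (Fin d) (Fin d) ℝ)
          * (((A u : Matrix (Fin d) (Fin d) ℝ) - (B u : Matrix (Fin d) (Fin d) ℝ))
            * (((B u)⁻¹ : GL (Fin d) ℝ) : Matrix (Fin d) (Fin d) ℝ))
          * ((CB⁻¹ : GL (Fin d) ℝ) : Matrix (Fin d) (Fin d) ℝ)‖
          ≤ (‖((CA : GL (Fin d) ℝ) : Matrix (Fin d) (Fin d) ℝ)‖
              * (((KA:ℝ) + (KB:ℝ)) * dist u x * aB'))
            * (‖((CA⁻¹ : GL (Fin d) ℝ) : Matrix (Fin d) (Fin d) ℝ)‖ * q n) := by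
        refine le_trans (norm_mul_le _ _) ?_
        refine mul_le_mul ?_ hCBinv (norm_nonneg _) ?_
        · refine le_trans (norm_mul_le _ _) ?_
          exact mul_le_mul_of_nonneg_left hmid (norm_nonneg _)
        · apply mul_nonneg (norm_nonneg _)
          apply mul_nonneg (mul_nonneg (by linarith) hdux0) haB'0
      refine le_trans step1 ?_
      have heq : (‖((CA : GL (Fin d) ℝ) : Matrix (Fin d) (Fin d) ℝ)‖
              * (((KA:ℝ) + (KB:ℝ)) * dist u x * aB'))
            * (‖((CA⁻¹ : GL (Fin d) ℝ) : Matrix (Fin d) (Fin d) ℝ)‖ * q n)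
          = (gnorm CA * gnorm CA⁻¹) * ((((KA:ℝ) + (KB:ℝ)) * dist u x * aB') * q n) := by
        simp only [gnorm]; ring
      rw [heq]
      have h9 : (0:ℝ) ≤ (((KA:ℝ) + (KB:ℝ)) * dist u x * aB') * q n := by
        apply mul_nonneg (mul_nonneg (mul_nonneg (by linarith) hdux0) haB'0) (hq0 n)
      calc (gnorm CA * gnorm CA⁻¹) * ((((KA:ℝ) + (KB:ℝ)) * dist u x * aB') * q n)
          ≤ (CA₃ * Real.exp (θ * n)) * ((((KA:ℝ) + (KB:ℝ)) * dist u x * aB') * q n) :=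
            mul_le_mul_of_nonneg_right (hFA' (z n) n) h9
        _ ≤ (CA₃ * Real.exp (θ * n)) * ((((KA:ℝ) + (KB:ℝ))
              * (Cu * Real.exp (-lam * ((n:ℝ)+1))) * aB') * q n) := by
            apply mul_le_mul_of_nonneg_left _ (mul_pos hCA₃pos (Real.exp_pos _)).le
            apply mul_le_mul_of_nonneg_right _ (hq0 n)
            apply mul_le_mul_of_nonneg_right _ haB'0
            exact mul_le_mul_of_nonneg_left hdux (by linarith)
        _ ≤ q n * (c * Real.exp ((θ - lam) * n)) := by
            rw [hcdef]
            have hee : Real.exp (θ * n) * Real.exp (-lam * ((n:ℝ)+1))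
                ≤ Real.exp ((θ - lam) * n) := by
              rw [← Real.exp_add]
              apply Real.exp_le_exp.mpr
              nlinarith [hf.lam_pos]
            have h10 : (0:ℝ) ≤ CA₃ * (((KA:ℝ) + (KB:ℝ)) * Cu * aB') * q n := by
              apply mul_nonneg (mul_nonneg hCA₃pos.le
                (mul_nonneg (mul_nonneg (by linarith) hCu0.le) haB'0)) (hq0 n)
            nlinarith [mul_le_mul_of_nonneg_left hee h10]
    have hfinal : q (n+1) ≤ q n + q n * (c * Real.exp ((θ - lam) * n)) := by
      have hq1 : q (n+1) = ‖((cocycle (⇑f) A (n+1) u * (cocycle (⇑f) B (n+1) u)⁻¹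
          : GL (Fin d) ℝ) : Matrix (Fin d) (Fin d) ℝ)‖ := rfl
      rw [hq1, hgl, hmat, hqn]
      exact le_trans (norm_add_le _ _) (by linarith [hterm])
    have hre : q n * (1 + c * Real.exp ((θ - lam) * n))
        = q n + q n * (c * Real.exp ((θ - lam) * n)) := by ring
    linarith [hfinal]
  have hind : ∀ n : ℕ, q n ≤ Real.exp (c * ∑ k ∈ Finset.range n, Real.exp ((θ - lam) * k)) := by
    intro n
    induction n with
    | zero =>
      have h1 : q 0 = ‖((1 : GL (Fin d) ℝ) : Matrix (Fin d) (Fin d) ℝ)‖ := by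
        have : (cocycle (⇑f) A 0 (z 0)) * (cocycle (⇑f) B 0 (z 0))⁻¹ = (1 : GL (Fin d) ℝ) := by
          show (1 : GL (Fin d) ℝ) * (1 : GL (Fin d) ℝ)⁻¹ = 1
          simp
        rw [hqdef]
        simp only [this]
      rw [h1, Units.val_one]
      simpa using Stmt18Aux.norm_one_le d
    | succ n ih =>
      refine le_trans (hqrec n) ?_
      have h1 : 1 + c * Real.exp ((θ - lam) * n)
          ≤ Real.exp (c * Real.exp ((θ - lam) * n)) := by
        linarith [Real.add_one_le_exp (c * Real.exp ((θ - lam) * n))]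
      have h2 : (0:ℝ) ≤ 1 + c * Real.exp ((θ - lam) * n) := by
        have := mul_nonneg hc0 (Real.exp_pos ((θ - lam) * n)).le
        linarith
      calc q n * (1 + c * Real.exp ((θ - lam) * n))
          ≤ Real.exp (c * ∑ k ∈ Finset.range n, Real.exp ((θ - lam) * k))
            * Real.exp (c * Real.exp ((θ - lam) * n)) :=
            mul_le_mul ih h1 h2 (Real.exp_pos _).le
        _ = Real.exp (c * ∑ k ∈ Finset.range (n+1), Real.exp ((θ - lam) * k)) := by
            rw [← Real.exp_add, Finset.sum_range_succ, mul_add]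
  set Kp := Real.exp (c * (1 - Real.exp (θ - lam))⁻¹) with hKpdef
  have hKp0 : (0:ℝ) < Kp := Real.exp_pos _
  have hqK : ∀ n, q n ≤ Kp := by
    intro n
    refine le_trans (hind n) (Real.exp_le_exp.mpr ?_)
    exact mul_le_mul_of_nonneg_left (Stmt18Aux.sum3 (θ - lam) (by linarith) n) hc0
  -- global constants for the final estimate
  set sd := (1 - Real.exp (-δ))⁻¹ with hsddef
  have hed1 : Real.exp (-δ) < 1 := by
    rw [← Real.exp_zero]; exact Real.exp_lt_exp.mpr (by linarith)
  have hsd0 : 0 < sd := inv_pos.mpr (by linarith)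
  set cA := aA' * CA₃ * (KA:ℝ) * C₅ * sd with hcAdef
  set cB := aB' * CB₃ * (KB:ℝ) * C₅ * sd with hcBdef
  have hcA0 : 0 ≤ cA :=
    mul_nonneg (mul_nonneg (mul_nonneg (mul_nonneg haA'0 hCA₃pos.le) hLA0) hC₅.le) hsd0.le
  have hcB0 : 0 ≤ cB :=
    mul_nonneg (mul_nonneg (mul_nonneg (mul_nonneg haB'0 hCB₃pos.le) hLB0) hC₅.le) hsd0.le
  set m1 := cA * C₆ * Real.exp (θ * n₀) with hm1def
  set m2 := cB * C₆ * Real.exp (θ * n₀) with hm2def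
  have hm10 : 0 ≤ m1 := mul_nonneg (mul_nonneg hcA0 hC₆.le) (Real.exp_pos _).le
  have hm20 : 0 ≤ m2 := mul_nonneg (mul_nonneg hcB0 hC₆.le) (Real.exp_pos _).le
  set k1 := Real.exp m1 * m1 with hk1def
  set k2 := Real.exp m2 * m2 with hk2def
  have hk10 : 0 ≤ k1 := mul_nonneg (Real.exp_pos _).le hm10
  have hk20 : 0 ≤ k2 := mul_nonneg (Real.exp_pos _).le hm20
  set m3 := cA * C₆ with hm3def
  set m4 := cB * C₆ with hm4def
  set k3 := Real.exp m3 * cA with hk3def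
  set k4 := Real.exp m4 * cB with hk4def
  have hk30 : 0 ≤ k3 := mul_nonneg (Real.exp_pos _).le hcA0
  have hk40 : 0 ≤ k4 := mul_nonneg (Real.exp_pos _).le hcB0
  have hk4C0 : 0 ≤ 1 + k4 * C₆ := by
    have := mul_nonneg hk40 hC₆.le
    linarith
  have hEE0 : 0 ≤ k3 * (1 + k4 * C₆) + k4 := by
    have := mul_nonneg hk30 hk4C0
    linarith
  set KD := Kp * (1 + CA₃ * C₆ * Real.exp (θ * n₀) * (k3 * (1 + k4 * C₆) + k4)) with hKDdef
  have hinner0 : 0 ≤ CA₃ * C₆ * Real.exp (θ * n₀) * (k3 * (1 + k4 * C₆) + k4) :=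
    mul_nonneg (mul_nonneg (mul_nonneg hCA₃pos.le hC₆.le) (Real.exp_pos _).le) hEE0
  have hKD0 : 0 < KD := mul_pos hKp0 (by linarith)
  refine ⟨KD * ((1 + k2) * k1 + k2) + 1, ?_, max n₀ 1, ?_⟩
  · have h0 : 0 ≤ KD * ((1 + k2) * k1 + k2) := by
      apply mul_nonneg hKD0.le
      have := mul_nonneg (by linarith : (0:ℝ) ≤ 1 + k2) hk10
      linarith
    linarith
  intro n hn
  have hn0 : n₀ ≤ n := le_trans (le_max_left _ _) hn
  have h1n : 1 ≤ n := le_trans (le_max_right _ _) hn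
  set X := Real.exp ((θ - lam) * ((n:ℝ) - n₀)) with hXdef
  have hX0 : 0 < X := Real.exp_pos _
  have hnn₀ : (0:ℝ) ≤ (n:ℝ) - n₀ := by
    have h : (n₀:ℝ) ≤ (n:ℝ) := by exact_mod_cast hn0
    linarith
  have hX1 : X ≤ 1 := by
    rw [hXdef, ← Real.exp_zero]
    apply Real.exp_le_exp.mpr
    exact mul_nonpos_iff.mpr (Or.inr ⟨by linarith, hnn₀⟩)
  set Dn := dist ((⇑f.symm)^[n] y) ((⇑f)^[n] y) with hDndef
  have hDn0 : 0 ≤ Dn := dist_nonneg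
  have hDnle : Dn ≤ C₆ * Real.exp (-lam * ((n:ℝ) - n₀)) := hD n hn0
  have hDnC₆ : Dn ≤ C₆ := by
    refine le_trans hDnle ?_
    have h1 : Real.exp (-lam * ((n:ℝ) - n₀)) ≤ 1 := by
      rw [← Real.exp_zero]; apply Real.exp_le_exp.mpr
      exact mul_nonpos_iff.mpr (Or.inr ⟨by linarith [hf.lam_pos], hnn₀⟩)
    have h2 := mul_le_mul_of_nonneg_left h1 hC₆.le
    linarith
  have hE : Real.exp (θ * (n:ℝ)) * Real.exp (-lam * ((n:ℝ) - n₀))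
      = Real.exp (θ * (n₀:ℝ)) * X := by
    rw [hXdef, ← Real.exp_add, ← Real.exp_add]; congr 1; ring
  have hexpDn : Real.exp (θ * (n:ℝ)) * Dn ≤ Real.exp (θ * (n₀:ℝ)) * (C₆ * X) := by
    calc Real.exp (θ * (n:ℝ)) * Dn
        ≤ Real.exp (θ * (n:ℝ)) * (C₆ * Real.exp (-lam * ((n:ℝ) - n₀))) :=
          mul_le_mul_of_nonneg_left hDnle (Real.exp_pos _).le
      _ = C₆ * (Real.exp (θ * (n:ℝ)) * Real.exp (-lam * ((n:ℝ) - n₀))) := by ring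
      _ = C₆ * (Real.exp (θ * (n₀:ℝ)) * X) := by rw [hE]
      _ = Real.exp (θ * (n₀:ℝ)) * (C₆ * X) := by ring
  -- shadowing data for this n
  obtain ⟨hpern, hshad⟩ := hp n
  set pn := p n with hpndef
  set w := (⇑f.symm)^[n] pn with hwdef
  have hzn : z n = (⇑f.symm)^[n] y := rfl
  have hfw : (⇑f)^[n] w = pn := Stmt18Aux.iter_cancel f n pn
  have hwp : (⇑f)^[n] pn = w := by
    have h2 : (⇑f)^[n] ((⇑f)^[n] pn) = pn := by
      rw [← Function.iterate_add_apply]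
      have he2 : n + n = 2 * n := by omega
      rw [he2]
      exact hpern
    have h3 := congrArg ((⇑f.symm)^[n]) h2
    rwa [Stmt18Aux.iter_cancel' f n] at h3
  have hf2nw : (⇑f)^[2*n] w = w := by
    have h5 : (⇑f)^[2*n] w = (⇑f)^[n] ((⇑f)^[n] w) := by
      rw [← Function.iterate_add_apply]; congr 1; omega
    rw [h5, hfw, hwp]
  have hdist1 : ∀ k, k < n → dist ((⇑f)^[k] y) ((⇑f)^[k] pn)
      ≤ C₅ * Real.exp (-(θ+δ) * ((n - k : ℕ):ℝ)) * Dn := by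
    intro k hk
    have h := hshad (n + k) (by omega)
    have hmin : min (n+k) (2*n - (n+k)) = n - k := by omega
    rw [hmin] at h
    have e1 : (⇑f)^[n+k] ((⇑f.symm)^[n] pn) = (⇑f)^[k] pn := Stmt18Aux.iter_mix f n k pn
    have e2 : (⇑f)^[n+k] ((⇑f.symm)^[n] y) = (⇑f)^[k] y := Stmt18Aux.iter_mix f n k y
    rw [e1, e2] at h
    rw [dist_comm]
    exact h
  have hdist3 : ∀ k, k < n → dist ((⇑f)^[k] (z n)) ((⇑f)^[k] w)
      ≤ C₅ * Real.exp (-(θ+δ) * (k:ℝ)) * Dn := by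
    intro k hk
    have h := hshad k (by omega)
    have hmin : min k (2*n - k) = k := by omega
    rw [hmin] at h
    rw [hzn, dist_comm]
    exact h
  have hr10 : ∀ k : ℕ, (0:ℝ) ≤ C₅ * Real.exp (-(θ+δ) * ((n - k : ℕ):ℝ)) * Dn :=
    fun k => mul_nonneg (mul_nonneg hC₅.le (Real.exp_pos _).le) hDn0
  have hr30 : ∀ k : ℕ, (0:ℝ) ≤ C₅ * Real.exp (-(θ+δ) * (k:ℝ)) * Dn :=
    fun k => mul_nonneg (mul_nonneg hC₅.le (Real.exp_pos _).le) hDn0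
  -- telescoping sums
  set S1 := ∑ k ∈ Finset.range n, aA' * CA₃ * (KA:ℝ) * Real.exp (θ * k)
    * (C₅ * Real.exp (-(θ+δ) * ((n - k : ℕ):ℝ)) * Dn) with hS1def
  set S2 := ∑ k ∈ Finset.range n, aB' * CB₃ * (KB:ℝ) * Real.exp (θ * k)
    * (C₅ * Real.exp (-(θ+δ) * ((n - k : ℕ):ℝ)) * Dn) with hS2def
  set S3 := ∑ k ∈ Finset.range n, aA' * CA₃ * (KA:ℝ) * Real.exp (θ * k)
    * (C₅ * Real.exp (-(θ+δ) * (k:ℝ)) * Dn) with hS3def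
  set S4 := ∑ k ∈ Finset.range n, aB' * CB₃ * (KB:ℝ) * Real.exp (θ * k)
    * (C₅ * Real.exp (-(θ+δ) * (k:ℝ)) * Dn) with hS4def
  have hS10 : 0 ≤ S1 := Finset.sum_nonneg fun k _ =>
    mul_nonneg (mul_nonneg (mul_nonneg (mul_nonneg haA'0 hCA₃pos.le) hLA0)
      (Real.exp_pos _).le) (hr10 k)
  have hS20 : 0 ≤ S2 := Finset.sum_nonneg fun k _ =>
    mul_nonneg (mul_nonneg (mul_nonneg (mul_nonneg haB'0 hCB₃pos.le) hLB0)
      (Real.exp_pos _).le) (hr10 k)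
  have hS30 : 0 ≤ S3 := Finset.sum_nonneg fun k _ =>
    mul_nonneg (mul_nonneg (mul_nonneg (mul_nonneg haA'0 hCA₃pos.le) hLA0)
      (Real.exp_pos _).le) (hr30 k)
  have hS40 : 0 ≤ S4 := Finset.sum_nonneg fun k _ =>
    mul_nonneg (mul_nonneg (mul_nonneg (mul_nonneg haB'0 hCB₃pos.le) hLB0)
      (Real.exp_pos _).le) (hr30 k)
  have hsum1 : S1 ≤ cA * (Real.exp (θ * (n:ℝ)) * Dn) := by
    rw [hS1def]
    have hpt : ∀ k ∈ Finset.range n, aA' * CA₃ * (KA:ℝ) * Real.exp (θ * k)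
        * (C₅ * Real.exp (-(θ+δ) * ((n - k : ℕ):ℝ)) * Dn)
        = (aA' * CA₃ * (KA:ℝ) * C₅ * Dn)
          * (Real.exp (θ * k) * Real.exp (-(θ+δ) * ((n - k : ℕ):ℝ))) := by
      intro k _; ring
    rw [Finset.sum_congr rfl hpt, ← Finset.mul_sum]
    have hs := Stmt18Aux.sum1 θ δ hθ0.le hδ n
    have hc' : 0 ≤ aA' * CA₃ * (KA:ℝ) * C₅ * Dn :=
      mul_nonneg (mul_nonneg (mul_nonneg (mul_nonneg haA'0 hCA₃pos.le) hLA0) hC₅.le) hDn0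
    calc (aA' * CA₃ * (KA:ℝ) * C₅ * Dn)
          * ∑ k ∈ Finset.range n, Real.exp (θ * k) * Real.exp (-(θ+δ) * ((n - k : ℕ):ℝ))
        ≤ (aA' * CA₃ * (KA:ℝ) * C₅ * Dn) * (Real.exp (θ * (n:ℝ)) * (1 - Real.exp (-δ))⁻¹) :=
          mul_le_mul_of_nonneg_left hs hc'
      _ = cA * (Real.exp (θ * (n:ℝ)) * Dn) := by rw [hcAdef, hsddef]; ring
  have hsum2 : S2 ≤ cB * (Real.exp (θ * (n:ℝ)) * Dn) := by
    rw [hS2def]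
    have hpt : ∀ k ∈ Finset.range n, aB' * CB₃ * (KB:ℝ) * Real.exp (θ * k)
        * (C₅ * Real.exp (-(θ+δ) * ((n - k : ℕ):ℝ)) * Dn)
        = (aB' * CB₃ * (KB:ℝ) * C₅ * Dn)
          * (Real.exp (θ * k) * Real.exp (-(θ+δ) * ((n - k : ℕ):ℝ))) := by
      intro k _; ring
    rw [Finset.sum_congr rfl hpt, ← Finset.mul_sum]
    have hs := Stmt18Aux.sum1 θ δ hθ0.le hδ n
    have hc' : 0 ≤ aB' * CB₃ * (KB:ℝ) * C₅ * Dn :=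
      mul_nonneg (mul_nonneg (mul_nonneg (mul_nonneg haB'0 hCB₃pos.le) hLB0) hC₅.le) hDn0
    calc (aB' * CB₃ * (KB:ℝ) * C₅ * Dn)
          * ∑ k ∈ Finset.range n, Real.exp (θ * k) * Real.exp (-(θ+δ) * ((n - k : ℕ):ℝ))
        ≤ (aB' * CB₃ * (KB:ℝ) * C₅ * Dn) * (Real.exp (θ * (n:ℝ)) * (1 - Real.exp (-δ))⁻¹) :=
          mul_le_mul_of_nonneg_left hs hc'
      _ = cB * (Real.exp (θ * (n:ℝ)) * Dn) := by rw [hcBdef, hsddef]; ring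
  have hsum3 : S3 ≤ cA * Dn := by
    rw [hS3def]
    have hpt : ∀ k ∈ Finset.range n, aA' * CA₃ * (KA:ℝ) * Real.exp (θ * k)
        * (C₅ * Real.exp (-(θ+δ) * (k:ℝ)) * Dn)
        = (aA' * CA₃ * (KA:ℝ) * C₅ * Dn)
          * (Real.exp (θ * k) * Real.exp (-(θ+δ) * (k:ℝ))) := by
      intro k _; ring
    rw [Finset.sum_congr rfl hpt, ← Finset.mul_sum]
    have hs := Stmt18Aux.sum2 θ δ hδ n
    have hc' : 0 ≤ aA' * CA₃ * (KA:ℝ) * C₅ * Dn :=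
      mul_nonneg (mul_nonneg (mul_nonneg (mul_nonneg haA'0 hCA₃pos.le) hLA0) hC₅.le) hDn0
    calc (aA' * CA₃ * (KA:ℝ) * C₅ * Dn)
          * ∑ k ∈ Finset.range n, Real.exp (θ * k) * Real.exp (-(θ+δ) * (k:ℝ))
        ≤ (aA' * CA₃ * (KA:ℝ) * C₅ * Dn) * (1 - Real.exp (-δ))⁻¹ :=
          mul_le_mul_of_nonneg_left hs hc'
      _ = cA * Dn := by rw [hcAdef, hsddef]; ring
  have hsum4 : S4 ≤ cB * Dn := by
    rw [hS4def]
    have hpt : ∀ k ∈ Finset.range n, aB' * CB₃ * (KB:ℝ) * Real.exp (θ * k)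
        * (C₅ * Real.exp (-(θ+δ) * (k:ℝ)) * Dn)
        = (aB' * CB₃ * (KB:ℝ) * C₅ * Dn)
          * (Real.exp (θ * k) * Real.exp (-(θ+δ) * (k:ℝ))) := by
      intro k _; ring
    rw [Finset.sum_congr rfl hpt, ← Finset.mul_sum]
    have hs := Stmt18Aux.sum2 θ δ hδ n
    have hc' : 0 ≤ aB' * CB₃ * (KB:ℝ) * C₅ * Dn :=
      mul_nonneg (mul_nonneg (mul_nonneg (mul_nonneg haB'0 hCB₃pos.le) hLB0) hC₅.le) hDn0
    calc (aB' * CB₃ * (KB:ℝ) * C₅ * Dn)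
          * ∑ k ∈ Finset.range n, Real.exp (θ * k) * Real.exp (-(θ+δ) * (k:ℝ))
        ≤ (aB' * CB₃ * (KB:ℝ) * C₅ * Dn) * (1 - Real.exp (-δ))⁻¹ :=
          mul_le_mul_of_nonneg_left hs hc'
      _ = cB * Dn := by rw [hcBdef, hsddef]; ring
  -- bounds via exp
  have hS1m : S1 ≤ m1 * X := by
    refine le_trans hsum1 ?_
    calc cA * (Real.exp (θ * (n:ℝ)) * Dn) ≤ cA * (Real.exp (θ * (n₀:ℝ)) * (C₆ * X)) :=
        mul_le_mul_of_nonneg_left hexpDn hcA0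
      _ = m1 * X := by rw [hm1def]; ring
  have hS2m : S2 ≤ m2 * X := by
    refine le_trans hsum2 ?_
    calc cB * (Real.exp (θ * (n:ℝ)) * Dn) ≤ cB * (Real.exp (θ * (n₀:ℝ)) * (C₆ * X)) :=
        mul_le_mul_of_nonneg_left hexpDn hcB0
      _ = m2 * X := by rw [hm2def]; ring
  have hS1m1 : S1 ≤ m1 := by
    have h := mul_le_mul_of_nonneg_left hX1 hm10
    linarith [hS1m]
  have hS2m2 : S2 ≤ m2 := by
    have h := mul_le_mul_of_nonneg_left hX1 hm20
    linarith [hS2m]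
  have hS3m : S3 ≤ m3 := by
    refine le_trans hsum3 ?_
    rw [hm3def]
    exact mul_le_mul_of_nonneg_left hDnC₆ hcA0
  have hS4m : S4 ≤ m4 := by
    refine le_trans hsum4 ?_
    rw [hm4def]
    exact mul_le_mul_of_nonneg_left hDnC₆ hcB0
  -- E terms
  set E1 := ((cocycle (⇑f) A n y)⁻¹ * cocycle (⇑f) A n pn : GL (Fin d) ℝ) with hE1def
  set E2 := ((cocycle (⇑f) B n pn)⁻¹ * cocycle (⇑f) B n y : GL (Fin d) ℝ) with hE2def
  set E3 := ((cocycle (⇑f) A n (z n))⁻¹ * cocycle (⇑f) A n w : GL (Fin d) ℝ) with hE3def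
  set E4 := ((cocycle (⇑f) B n w)⁻¹ * cocycle (⇑f) B n (z n) : GL (Fin d) ℝ) with hE4def
  have htele1 := Stmt18Aux.tele (⇑f) A CA₃ aA' (KA:ℝ) θ hCA₃pos.le haA'0 hLA0 hFA' haA' hLipA
    y pn (fun k => C₅ * Real.exp (-(θ+δ) * ((n - k : ℕ):ℝ)) * Dn) hr10 n hdist1
  have htele2 := Stmt18Aux.tele (⇑f) B CB₃ aB' (KB:ℝ) θ hCB₃pos.le haB'0 hLB0 hFB' haB' hLipB
    pn y (fun k => C₅ * Real.exp (-(θ+δ) * ((n - k : ℕ):ℝ)) * Dn) hr10 n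
    (fun k hk => by rw [dist_comm]; exact hdist1 k hk)
  have htele3 := Stmt18Aux.tele (⇑f) A CA₃ aA' (KA:ℝ) θ hCA₃pos.le haA'0 hLA0 hFA' haA' hLipA
    (z n) w (fun k => C₅ * Real.exp (-(θ+δ) * (k:ℝ)) * Dn) hr30 n hdist3
  have htele4 := Stmt18Aux.tele (⇑f) B CB₃ aB' (KB:ℝ) θ hCB₃pos.le haB'0 hLB0 hFB' haB' hLipB
    w (z n) (fun k => C₅ * Real.exp (-(θ+δ) * (k:ℝ)) * Dn) hr30 n
    (fun k hk => by rw [dist_comm]; exact hdist3 k hk)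
  have he1 : ‖((E1 : GL (Fin d) ℝ) : Matrix (Fin d) (Fin d) ℝ) - 1‖ ≤ k1 * X := by
    have h1 : ‖((E1 : GL (Fin d) ℝ) : Matrix (Fin d) (Fin d) ℝ) - 1‖ ≤ Real.exp S1 - 1 := by
      rw [hE1def]; linarith [htele1]
    refine le_trans h1 ?_
    refine le_trans (Stmt18Aux.exp_sub_one_le S1 m1 hS10 hS1m1) ?_
    calc Real.exp m1 * S1 ≤ Real.exp m1 * (m1 * X) :=
        mul_le_mul_of_nonneg_left hS1m (Real.exp_pos _).le
      _ = k1 * X := by rw [hk1def]; ring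
  have he2 : ‖((E2 : GL (Fin d) ℝ) : Matrix (Fin d) (Fin d) ℝ) - 1‖ ≤ k2 * X := by
    have h1 : ‖((E2 : GL (Fin d) ℝ) : Matrix (Fin d) (Fin d) ℝ) - 1‖ ≤ Real.exp S2 - 1 := by
      rw [hE2def]; linarith [htele2]
    refine le_trans h1 ?_
    refine le_trans (Stmt18Aux.exp_sub_one_le S2 m2 hS20 hS2m2) ?_
    calc Real.exp m2 * S2 ≤ Real.exp m2 * (m2 * X) :=
        mul_le_mul_of_nonneg_left hS2m (Real.exp_pos _).le
      _ = k2 * X := by rw [hk2def]; ring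
  have he3 : ‖((E3 : GL (Fin d) ℝ) : Matrix (Fin d) (Fin d) ℝ) - 1‖ ≤ k3 * Dn := by
    have h1 : ‖((E3 : GL (Fin d) ℝ) : Matrix (Fin d) (Fin d) ℝ) - 1‖ ≤ Real.exp S3 - 1 := by
      rw [hE3def]; linarith [htele3]
    refine le_trans h1 ?_
    refine le_trans (Stmt18Aux.exp_sub_one_le S3 m3 hS30 hS3m) ?_
    calc Real.exp m3 * S3 ≤ Real.exp m3 * (cA * Dn) :=
        mul_le_mul_of_nonneg_left hsum3 (Real.exp_pos _).le
      _ = k3 * Dn := by rw [hk3def]; ring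
  have he4 : ‖((E4 : GL (Fin d) ℝ) : Matrix (Fin d) (Fin d) ℝ) - 1‖ ≤ k4 * Dn := by
    have h1 : ‖((E4 : GL (Fin d) ℝ) : Matrix (Fin d) (Fin d) ℝ) - 1‖ ≤ Real.exp S4 - 1 := by
      rw [hE4def]; linarith [htele4]
    refine le_trans h1 ?_
    refine le_trans (Stmt18Aux.exp_sub_one_le S4 m4 hS40 hS4m) ?_
    calc Real.exp m4 * S4 ≤ Real.exp m4 * (cB * Dn) :=
        mul_le_mul_of_nonneg_left hsum4 (Real.exp_pos _).le
      _ = k4 * Dn := by rw [hk4def]; ring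
  -- periodic data identity
  have hpkey : (cocycle (⇑f) A n pn)⁻¹ * cocycle (⇑f) B n pn
      = cocycle (⇑f) A n w * (cocycle (⇑f) B n w)⁻¹ := by
    have h2 : cocycle (⇑f) A (2*n) w = cocycle (⇑f) A n pn * cocycle (⇑f) A n w := by
      have he2 : 2*n = n + n := by omega
      rw [he2, Stmt18Aux.cocycle_add, hfw]
    have h3 : cocycle (⇑f) B (2*n) w = cocycle (⇑f) B n pn * cocycle (⇑f) B n w := by
      have he2 : 2*n = n + n := by omega
      rw [he2, Stmt18Aux.cocycle_add, hfw]
    have h4 : cocycle (⇑f) A n pn * cocycle (⇑f) A n w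
        = cocycle (⇑f) B n pn * cocycle (⇑f) B n w := by
      rw [← h2, ← h3, hper w (2*n) (by omega) hf2nw]
    calc (cocycle (⇑f) A n pn)⁻¹ * cocycle (⇑f) B n pn
        = (cocycle (⇑f) A n pn)⁻¹ * (cocycle (⇑f) B n pn * cocycle (⇑f) B n w)
          * (cocycle (⇑f) B n w)⁻¹ := by group
      _ = (cocycle (⇑f) A n pn)⁻¹ * (cocycle (⇑f) A n pn * cocycle (⇑f) A n w)
          * (cocycle (⇑f) B n w)⁻¹ := by rw [h4]
      _ = cocycle (⇑f) A n w * (cocycle (⇑f) B n w)⁻¹ := by group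
  set Dp := ((cocycle (⇑f) A n pn)⁻¹ * cocycle (⇑f) B n pn : GL (Fin d) ℝ) with hDpdef
  have hDglE : Dp = cocycle (⇑f) A n (z n) * (E3 * E4) * (cocycle (⇑f) B n (z n))⁻¹ := by
    rw [hpkey, hE3def, hE4def]; group
  have hqnval : q n = ‖((cocycle (⇑f) A n (z n) * (cocycle (⇑f) B n (z n))⁻¹
      : GL (Fin d) ℝ) : Matrix (Fin d) (Fin d) ℝ)‖ := rfl
  have hDval : ((Dp : GL (Fin d) ℝ) : Matrix (Fin d) (Fin d) ℝ)
      = ((cocycle (⇑f) A n (z n) * (cocycle (⇑f) B n (z n))⁻¹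
          : GL (Fin d) ℝ) : Matrix (Fin d) (Fin d) ℝ)
        + ((cocycle (⇑f) A n (z n) : GL (Fin d) ℝ) : Matrix (Fin d) (Fin d) ℝ)
          * (((E3 * E4 : GL (Fin d) ℝ) : Matrix (Fin d) (Fin d) ℝ) - 1)
          * (((cocycle (⇑f) B n (z n))⁻¹ : GL (Fin d) ℝ) : Matrix (Fin d) (Fin d) ℝ) := by
    rw [hDglE]
    simp only [Units.val_mul]
    noncomm_ring
  have hE4norm : ‖((E4 : GL (Fin d) ℝ) : Matrix (Fin d) (Fin d) ℝ)‖ ≤ 1 + k4 * Dn := by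
    calc ‖((E4 : GL (Fin d) ℝ) : Matrix (Fin d) (Fin d) ℝ)‖
        = ‖(1 : Matrix (Fin d) (Fin d) ℝ)
          + (((E4 : GL (Fin d) ℝ) : Matrix (Fin d) (Fin d) ℝ) - 1)‖ := by congr 1; abel
      _ ≤ ‖(1 : Matrix (Fin d) (Fin d) ℝ)‖
          + ‖((E4 : GL (Fin d) ℝ) : Matrix (Fin d) (Fin d) ℝ) - 1‖ := norm_add_le _ _
      _ ≤ 1 + k4 * Dn := by
          have := Stmt18Aux.norm_one_le d
          linarith [he4]
  have hE34 : ‖((E3 * E4 : GL (Fin d) ℝ) : Matrix (Fin d) (Fin d) ℝ) - 1‖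
      ≤ (k3 * (1 + k4 * C₆) + k4) * Dn := by
    have hid : ((E3 * E4 : GL (Fin d) ℝ) : Matrix (Fin d) (Fin d) ℝ) - 1
        = (((E3 : GL (Fin d) ℝ) : Matrix (Fin d) (Fin d) ℝ) - 1)
            * ((E4 : GL (Fin d) ℝ) : Matrix (Fin d) (Fin d) ℝ)
          + (((E4 : GL (Fin d) ℝ) : Matrix (Fin d) (Fin d) ℝ) - 1) := by
      simp only [Units.val_mul]
      noncomm_ring
    rw [hid]
    refine le_trans (norm_add_le _ _) ?_
    have h1 : ‖(((E3 : GL (Fin d) ℝ) : Matrix (Fin d) (Fin d) ℝ) - 1)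
        * ((E4 : GL (Fin d) ℝ) : Matrix (Fin d) (Fin d) ℝ)‖
        ≤ (k3 * Dn) * (1 + k4 * Dn) := by
      refine le_trans (norm_mul_le _ _) ?_
      exact mul_le_mul he3 hE4norm (norm_nonneg _) (mul_nonneg hk30 hDn0)
    have h2 : (k3 * Dn) * (1 + k4 * Dn) + k4 * Dn ≤ (k3 * (1 + k4 * C₆) + k4) * Dn := by
      have h3 : k4 * Dn ≤ k4 * C₆ := mul_le_mul_of_nonneg_left hDnC₆ hk40
      have h4 : (k3 * Dn) * (1 + k4 * Dn) ≤ (k3 * Dn) * (1 + k4 * C₆) :=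
        mul_le_mul_of_nonneg_left (by linarith) (mul_nonneg hk30 hDn0)
      have h5 : (k3 * Dn) * (1 + k4 * C₆) = k3 * (1 + k4 * C₆) * Dn := by ring
      linarith
    linarith [he4]
  have hCBninv : ‖(((cocycle (⇑f) B n (z n))⁻¹ : GL (Fin d) ℝ) : Matrix (Fin d) (Fin d) ℝ)‖
      ≤ ‖(((cocycle (⇑f) A n (z n))⁻¹ : GL (Fin d) ℝ) : Matrix (Fin d) (Fin d) ℝ)‖ * q n := by
    have hval : (((cocycle (⇑f) B n (z n))⁻¹ : GL (Fin d) ℝ) : Matrix (Fin d) (Fin d) ℝ)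
        = (((cocycle (⇑f) A n (z n))⁻¹ : GL (Fin d) ℝ) : Matrix (Fin d) (Fin d) ℝ)
          * ((cocycle (⇑f) A n (z n) * (cocycle (⇑f) B n (z n))⁻¹
            : GL (Fin d) ℝ) : Matrix (Fin d) (Fin d) ℝ) := by
      rw [← Units.val_mul, inv_mul_cancel_left]
    rw [hval, hqnval]
    exact norm_mul_le _ _
  have hDpnorm : ‖((Dp : GL (Fin d) ℝ) : Matrix (Fin d) (Fin d) ℝ)‖ ≤ KD := by
    rw [hDval]
    refine le_trans (norm_add_le _ _) ?_
    have hmid : ‖((cocycle (⇑f) A n (z n) : GL (Fin d) ℝ) : Matrix (Fin d) (Fin d) ℝ)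
        * (((E3 * E4 : GL (Fin d) ℝ) : Matrix (Fin d) (Fin d) ℝ) - 1)
        * (((cocycle (⇑f) B n (z n))⁻¹ : GL (Fin d) ℝ) : Matrix (Fin d) (Fin d) ℝ)‖
        ≤ (‖((cocycle (⇑f) A n (z n) : GL (Fin d) ℝ) : Matrix (Fin d) (Fin d) ℝ)‖
            * ((k3 * (1 + k4 * C₆) + k4) * Dn))
          * (‖(((cocycle (⇑f) A n (z n))⁻¹ : GL (Fin d) ℝ) : Matrix (Fin d) (Fin d) ℝ)‖
            * q n) := by
      refine le_trans (norm_mul_le _ _) ?_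
      refine mul_le_mul ?_ hCBninv (norm_nonneg _) ?_
      · refine le_trans (norm_mul_le _ _) ?_
        exact mul_le_mul_of_nonneg_left hE34 (norm_nonneg _)
      · exact mul_nonneg (norm_nonneg _) (mul_nonneg hEE0 hDn0)
    have hfbn := hFA' (z n) n
    have heq2 : (‖((cocycle (⇑f) A n (z n) : GL (Fin d) ℝ) : Matrix (Fin d) (Fin d) ℝ)‖
            * ((k3 * (1 + k4 * C₆) + k4) * Dn))
          * (‖(((cocycle (⇑f) A n (z n))⁻¹ : GL (Fin d) ℝ) : Matrix (Fin d) (Fin d) ℝ)‖ * q n)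
        = (gnorm (cocycle (⇑f) A n (z n)) * gnorm ((cocycle (⇑f) A n (z n))⁻¹))
          * (((k3 * (1 + k4 * C₆) + k4) * Dn) * q n) := by
      simp only [gnorm]; ring
    have hq0n := hq0 n
    have hqKn := hqK n
    have h11 : ‖((cocycle (⇑f) A n (z n) : GL (Fin d) ℝ) : Matrix (Fin d) (Fin d) ℝ)
        * (((E3 * E4 : GL (Fin d) ℝ) : Matrix (Fin d) (Fin d) ℝ) - 1)
        * (((cocycle (⇑f) B n (z n))⁻¹ : GL (Fin d) ℝ) : Matrix (Fin d) (Fin d) ℝ)‖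
        ≤ (CA₃ * Real.exp (θ * n)) * (((k3 * (1 + k4 * C₆) + k4) * Dn) * Kp) := by
      refine le_trans hmid ?_
      rw [heq2]
      have h12 : (0:ℝ) ≤ ((k3 * (1 + k4 * C₆) + k4) * Dn) * q n :=
        mul_nonneg (mul_nonneg hEE0 hDn0) hq0n
      calc (gnorm (cocycle (⇑f) A n (z n)) * gnorm ((cocycle (⇑f) A n (z n))⁻¹))
            * (((k3 * (1 + k4 * C₆) + k4) * Dn) * q n)
          ≤ (CA₃ * Real.exp (θ * n)) * (((k3 * (1 + k4 * C₆) + k4) * Dn) * q n) :=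
            mul_le_mul_of_nonneg_right hfbn h12
        _ ≤ (CA₃ * Real.exp (θ * n)) * (((k3 * (1 + k4 * C₆) + k4) * Dn) * Kp) := by
            apply mul_le_mul_of_nonneg_left _ (mul_pos hCA₃pos (Real.exp_pos _)).le
            exact mul_le_mul_of_nonneg_left hqKn (mul_nonneg hEE0 hDn0)
    have h13 : (CA₃ * Real.exp (θ * n)) * (((k3 * (1 + k4 * C₆) + k4) * Dn) * Kp)
        ≤ Kp * (CA₃ * C₆ * Real.exp (θ * n₀) * (k3 * (1 + k4 * C₆) + k4)) := by
      have h14 : CA₃ * (k3 * (1 + k4 * C₆) + k4) * Kp * (Real.exp (θ * (n:ℝ)) * Dn)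
          ≤ CA₃ * (k3 * (1 + k4 * C₆) + k4) * Kp * (Real.exp (θ * (n₀:ℝ)) * (C₆ * X)) := by
        apply mul_le_mul_of_nonneg_left hexpDn
        exact mul_nonneg (mul_nonneg hCA₃pos.le hEE0) hKp0.le
      have h15 : Real.exp (θ * (n₀:ℝ)) * (C₆ * X) ≤ Real.exp (θ * (n₀:ℝ)) * (C₆ * 1) := by
        apply mul_le_mul_of_nonneg_left _ (Real.exp_pos _).le
        exact mul_le_mul_of_nonneg_left hX1 hC₆.le
      have h16 : (0:ℝ) ≤ CA₃ * (k3 * (1 + k4 * C₆) + k4) * Kp :=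
        mul_nonneg (mul_nonneg hCA₃pos.le hEE0) hKp0.le
      calc (CA₃ * Real.exp (θ * n)) * (((k3 * (1 + k4 * C₆) + k4) * Dn) * Kp)
          = CA₃ * (k3 * (1 + k4 * C₆) + k4) * Kp * (Real.exp (θ * (n:ℝ)) * Dn) := by ring
        _ ≤ CA₃ * (k3 * (1 + k4 * C₆) + k4) * Kp * (Real.exp (θ * (n₀:ℝ)) * (C₆ * X)) := h14
        _ ≤ CA₃ * (k3 * (1 + k4 * C₆) + k4) * Kp * (Real.exp (θ * (n₀:ℝ)) * (C₆ * 1)) :=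
            mul_le_mul_of_nonneg_left h15 h16
        _ = Kp * (CA₃ * C₆ * Real.exp (θ * n₀) * (k3 * (1 + k4 * C₆) + k4)) := by ring
    calc ‖((cocycle (⇑f) A n (z n) * (cocycle (⇑f) B n (z n))⁻¹
          : GL (Fin d) ℝ) : Matrix (Fin d) (Fin d) ℝ)‖
          + ‖((cocycle (⇑f) A n (z n) : GL (Fin d) ℝ) : Matrix (Fin d) (Fin d) ℝ)
            * (((E3 * E4 : GL (Fin d) ℝ) : Matrix (Fin d) (Fin d) ℝ) - 1)
            * (((cocycle (⇑f) B n (z n))⁻¹ : GL (Fin d) ℝ) : Matrix (Fin d) (Fin d) ℝ)‖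
        ≤ Kp + Kp * (CA₃ * C₆ * Real.exp (θ * n₀) * (k3 * (1 + k4 * C₆) + k4)) := by
          have := hqK n
          rw [hqnval] at this
          linarith [le_trans h11 h13]
      _ = KD := by rw [hKDdef]; ring
  -- final assembly
  have hfingl : (cocycle (⇑f) A n y)⁻¹ * cocycle (⇑f) B n y = E1 * Dp * E2 := by
    rw [hE1def, hDpdef, hE2def]; group
  have hfm : ((E1 * Dp * E2 : GL (Fin d) ℝ) : Matrix (Fin d) (Fin d) ℝ)
      - ((Dp : GL (Fin d) ℝ) : Matrix (Fin d) (Fin d) ℝ)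
      = (((E1 : GL (Fin d) ℝ) : Matrix (Fin d) (Fin d) ℝ) - 1)
          * ((Dp : GL (Fin d) ℝ) : Matrix (Fin d) (Fin d) ℝ)
          * ((E2 : GL (Fin d) ℝ) : Matrix (Fin d) (Fin d) ℝ)
        + ((Dp : GL (Fin d) ℝ) : Matrix (Fin d) (Fin d) ℝ)
          * (((E2 : GL (Fin d) ℝ) : Matrix (Fin d) (Fin d) ℝ) - 1) := by
    simp only [Units.val_mul]
    noncomm_ring
  have hE2norm : ‖((E2 : GL (Fin d) ℝ) : Matrix (Fin d) (Fin d) ℝ)‖ ≤ 1 + k2 := by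
    have h20 : k2 * X ≤ k2 := by
      have := mul_le_mul_of_nonneg_left hX1 hk20
      linarith
    calc ‖((E2 : GL (Fin d) ℝ) : Matrix (Fin d) (Fin d) ℝ)‖
        = ‖(1 : Matrix (Fin d) (Fin d) ℝ)
          + (((E2 : GL (Fin d) ℝ) : Matrix (Fin d) (Fin d) ℝ) - 1)‖ := by congr 1; abel
      _ ≤ ‖(1 : Matrix (Fin d) (Fin d) ℝ)‖
          + ‖((E2 : GL (Fin d) ℝ) : Matrix (Fin d) (Fin d) ℝ) - 1‖ := norm_add_le _ _
      _ ≤ 1 + k2 := by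
          have := Stmt18Aux.norm_one_le d
          linarith [he2]
  rw [hfingl, hfm]
  refine le_trans (norm_add_le _ _) ?_
  have ht1 : ‖(((E1 : GL (Fin d) ℝ) : Matrix (Fin d) (Fin d) ℝ) - 1)
      * ((Dp : GL (Fin d) ℝ) : Matrix (Fin d) (Fin d) ℝ)
      * ((E2 : GL (Fin d) ℝ) : Matrix (Fin d) (Fin d) ℝ)‖
      ≤ (k1 * X) * KD * (1 + k2) := by
    have hkX0 : (0:ℝ) ≤ k1 * X := mul_nonneg hk10 hX0.le
    have hkXK0 : (0:ℝ) ≤ (k1 * X) * KD := mul_nonneg hkX0 hKD0.le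
    refine le_trans (norm_mul_le _ _) ?_
    refine mul_le_mul ?_ hE2norm (norm_nonneg _) hkXK0
    refine le_trans (norm_mul_le _ _) ?_
    exact mul_le_mul he1 hDpnorm (norm_nonneg _) hkX0
  have ht2 : ‖((Dp : GL (Fin d) ℝ) : Matrix (Fin d) (Fin d) ℝ)
      * (((E2 : GL (Fin d) ℝ) : Matrix (Fin d) (Fin d) ℝ) - 1)‖
      ≤ KD * (k2 * X) := by
    refine le_trans (norm_mul_le _ _) ?_
    exact mul_le_mul hDpnorm he2 (norm_nonneg _) hKD0.le
  calc ‖(((E1 : GL (Fin d) ℝ) : Matrix (Fin d) (Fin d) ℝ) - 1)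
        * ((Dp : GL (Fin d) ℝ) : Matrix (Fin d) (Fin d) ℝ)
        * ((E2 : GL (Fin d) ℝ) : Matrix (Fin d) (Fin d) ℝ)‖
      + ‖((Dp : GL (Fin d) ℝ) : Matrix (Fin d) (Fin d) ℝ)
        * (((E2 : GL (Fin d) ℝ) : Matrix (Fin d) (Fin d) ℝ) - 1)‖
      ≤ (k1 * X) * KD * (1 + k2) + KD * (k2 * X) := add_le_add ht1 ht2
    _ = (KD * ((1 + k2) * k1 + k2)) * X := by ring
    _ ≤ (KD * ((1 + k2) * k1 + k2) + 1) * X := by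
        apply mul_le_mul_of_nonneg_right (by linarith) hX0.le
end
end

section
/- Let f be a hyperbolic homeomorphism with contraction rate λ, A Lipschitz and fiber bunched with exponent θ, δ > 0 with θ + δ < λ, and suppose points y, p satisfy d(f^j(f^{-n}(y)), f^j(f^{-n}(p))) ≤ C₅ e^{-(θ+δ)min{j, 2n−j}} D for all 0 ≤ j ≤ 2n, where D = d(f^{-n}(y), fⁿ(y)). Then there exists C₉ > 0, depending only on A, λ, θ, δ, C₅, C₃ (not on n, y, p), such that ‖A^{n−j}(f^j(y))‖ · ‖(A^{n−j}(f^j(p)))⁻¹‖ ≤ C₉ e^{θ(n−j)} for all 0 ≤ j ≤ n. -/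
open Filter Topology Metric Matrix
open scoped Matrix.Norms.L2Operator
noncomputable section

lemma cocycle_succ' {M G : Type*} [Group G] (f : M → M) (A : M → G) :
    ∀ (m : ℕ) (x : M), cocycle f A (m + 1) x = cocycle f A m (f x) * A x := by
  intro m
  induction m with
  | zero => intro x; simp [cocycle]
  | succ m ih =>
    intro x
    have h1 : cocycle f A (m + 1 + 1) x = A (f^[m+1] x) * cocycle f A (m+1) x := rfl
    have h2 : cocycle f A (m + 1) (f x) = A (f^[m] (f x)) * cocycle f A m (f x) := rfl
    rw [h1, ih x, h2, Function.iterate_succ_apply, mul_assoc]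

lemma cocycle_add {M G : Type*} [Group G] (f : M → M) (A : M → G) :
    ∀ (k m : ℕ) (x : M), cocycle f A (m + k) x = cocycle f A m (f^[k] x) * cocycle f A k x := by
  intro k
  induction k with
  | zero => intro m x; simp [cocycle]
  | succ k ih =>
    intro m x
    have h : m + (k+1) = (m + k) + 1 := by omega
    rw [h, cocycle_succ', ih m (f x), cocycle_succ' f A k x, ← Function.iterate_succ_apply, mul_assoc]

lemma telescope {M : Type*} {d : ℕ} (f : M → M) (A : M → GL (Fin d) ℝ) :
    ∀ (m : ℕ) (x z : M),
      (((cocycle f A m z)⁻¹ : GL (Fin d) ℝ) : Matrix (Fin d) (Fin d) ℝ)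
        - (((cocycle f A m x)⁻¹ : GL (Fin d) ℝ) : Matrix (Fin d) (Fin d) ℝ)
      = ∑ i ∈ Finset.range m,
          (((cocycle f A i x)⁻¹ : GL (Fin d) ℝ) : Matrix (Fin d) (Fin d) ℝ)
          * ((((A (f^[i] z))⁻¹ : GL (Fin d) ℝ) : Matrix (Fin d) (Fin d) ℝ)
              - (((A (f^[i] x))⁻¹ : GL (Fin d) ℝ) : Matrix (Fin d) (Fin d) ℝ))
          * (((cocycle f A (m - 1 - i) (f^[i+1] z))⁻¹ : GL (Fin d) ℝ) : Matrix (Fin d) (Fin d) ℝ) := by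
  intro m
  induction m with
  | zero => intro x z; simp [cocycle]
  | succ m ih =>
    intro x z
    have e1 : ∀ (k : ℕ) (w : M),
        ((cocycle f A (k+1) w)⁻¹ : GL (Fin d) ℝ) = (A w)⁻¹ * (cocycle f A k (f w))⁻¹ := by
      intro k w; rw [cocycle_succ', _root_.mul_inv_rev]
    rw [Finset.sum_range_succ']
    have lhs_eq :
        (((cocycle f A (m+1) z)⁻¹ : GL (Fin d) ℝ) : Matrix (Fin d) (Fin d) ℝ)
          - (((cocycle f A (m+1) x)⁻¹ : GL (Fin d) ℝ) : Matrix (Fin d) (Fin d) ℝ)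
        = (((A x)⁻¹ : GL (Fin d) ℝ) : Matrix (Fin d) (Fin d) ℝ) *
            ((((cocycle f A m (f z))⁻¹ : GL (Fin d) ℝ) : Matrix (Fin d) (Fin d) ℝ)
              - (((cocycle f A m (f x))⁻¹ : GL (Fin d) ℝ) : Matrix (Fin d) (Fin d) ℝ))
          + ((((A z)⁻¹ : GL (Fin d) ℝ) : Matrix (Fin d) (Fin d) ℝ)
              - (((A x)⁻¹ : GL (Fin d) ℝ) : Matrix (Fin d) (Fin d) ℝ)) *
            (((cocycle f A m (f z))⁻¹ : GL (Fin d) ℝ) : Matrix (Fin d) (Fin d) ℝ) := by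
      rw [e1 m z, e1 m x, Units.val_mul, Units.val_mul]
      noncomm_ring
    rw [lhs_eq, ih (f x) (f z), Finset.mul_sum]
    congr 1
    · apply Finset.sum_congr rfl
      intro i hi
      have hmi : m + 1 - 1 - (i + 1) = m - 1 - i := by omega
      rw [hmi, e1 i x, Units.val_mul, Function.iterate_succ_apply f i z,
        Function.iterate_succ_apply f i x, Function.iterate_succ_apply f (i+1) z]
      noncomm_ring
    · simp [cocycle]


/-- along a shadowed orbit segment one has the uniform bound
`‖A^{n−j}(f^j y)‖·‖(A^{n−j}(f^j p))⁻¹‖ ≤ C₉ e^{θ(n−j)}` for `0 ≤ j ≤ n`, with `C₉` depending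
only on `A, λ, θ, δ, C₅, C₃` (not on `n`, `y`, `p`). -/
theorem stmt19 {M : Type*} [MetricSpace M] [CompactSpace M] {d : ℕ}
    (f : M ≃ M) (C₁ lam ε τ : ℝ) (hf : IsHyperbolic f C₁ lam ε τ)
    (A : M → GL (Fin d) ℝ) (K : NNReal)
    (hA : LipschitzWith K fun x => (A x : Matrix (Fin d) (Fin d) ℝ))
    (θ C₃ : ℝ) (hθ0 : 0 < θ) (hC₃ : 0 < C₃)
    (hFB : ∀ (x : M) (m : ℕ),
      gnorm (cocycle (⇑f) A m x) * gnorm ((cocycle (⇑f) A m x)⁻¹) ≤ C₃ * Real.exp (θ * m))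
    (δ C₅ : ℝ) (hδ : 0 < δ) (hθδ : θ + δ < lam) (hC₅ : 0 < C₅) :
    ∃ C₉ > (0 : ℝ), ∀ (n : ℕ) (y p : M),
      (∀ j ≤ 2 * n, dist ((⇑f)^[j] ((⇑f.symm)^[n] y)) ((⇑f)^[j] ((⇑f.symm)^[n] p)) ≤
        C₅ * Real.exp (-(θ + δ) * (↑(min j (2 * n - j)) : ℝ)) *
          dist ((⇑f.symm)^[n] y) ((⇑f)^[n] y)) →
      ∀ j ≤ n,
        gnorm (cocycle (⇑f) A (n - j) ((⇑f)^[j] y)) *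
          gnorm ((cocycle (⇑f) A (n - j) ((⇑f)^[j] p))⁻¹) ≤
        C₉ * Real.exp (θ * (↑(n - j) : ℝ)) := by
  classical
  -- trivial case: M empty
  rcases isEmpty_or_nonempty M with hM | hM
  · exact ⟨1, one_pos, fun n y p _ j hj => (IsEmpty.false y).elim⟩
  -- trivial case: d = 0
  rcases Nat.eq_zero_or_pos d with hd | hd
  · refine ⟨C₃, hC₃, ?_⟩
    intro n y p _ j hj
    subst hd
    have h0 : ∀ g : GL (Fin 0) ℝ, gnorm g = 0 := by
      intro g
      have : (g : Matrix (Fin 0) (Fin 0) ℝ) = 0 := by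
        funext i; exact i.elim0
      simp [gnorm, this]
    rw [h0, h0, zero_mul]
    exact le_of_lt (mul_pos hC₃ (Real.exp_pos _))
  -- main case
  simp only [gnorm] at hFB ⊢
  have hgn : ∀ g : GL (Fin d) ℝ, (0:ℝ) ≤ ‖(g : Matrix (Fin d) (Fin d) ℝ)‖ := fun g => norm_nonneg _
  -- upper bound B for ‖A x‖
  have hcont : Continuous fun x : M => ‖(A x : Matrix (Fin d) (Fin d) ℝ)‖ := hA.continuous.norm
  obtain ⟨x₀, -, hx₀⟩ := isCompact_univ.exists_isMaxOn Set.univ_nonempty hcont.continuousOn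
  obtain ⟨B, hBdef⟩ : ∃ B : ℝ, B = ‖(A x₀ : Matrix (Fin d) (Fin d) ℝ)‖ := ⟨_, rfl⟩
  have hB : ∀ x : M, ‖(A x : Matrix (Fin d) (Fin d) ℝ)‖ ≤ B := by
    intro x; rw [hBdef]; exact isMaxOn_iff.mp hx₀ x (Set.mem_univ x)
  have hB0 : 0 ≤ B := by rw [hBdef]; exact norm_nonneg _
  -- lower bound b for ‖A x‖
  obtain ⟨x₁, -, hx₁⟩ := isCompact_univ.exists_isMinOn Set.univ_nonempty hcont.continuousOn
  obtain ⟨b, hbdef⟩ : ∃ b : ℝ, b = ‖(A x₁ : Matrix (Fin d) (Fin d) ℝ)‖ := ⟨_, rfl⟩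
  have hb : ∀ x : M, b ≤ ‖(A x : Matrix (Fin d) (Fin d) ℝ)‖ := by
    intro x; rw [hbdef]; exact isMinOn_iff.mp hx₁ x (Set.mem_univ x)
  have hbpos : 0 < b := by
    rw [hbdef, norm_pos_iff]
    intro h0
    have h1 : ((A x₁ : Matrix (Fin d) (Fin d) ℝ)) * ((A x₁)⁻¹ : GL (Fin d) ℝ) = 1 :=
      Units.mul_inv _
    rw [h0, zero_mul] at h1
    have hentry := congrFun (congrFun h1 ⟨0, hd⟩) ⟨0, hd⟩
    simp [Matrix.one_apply] at hentry
  -- uniform bound for ‖(A x)⁻¹‖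
  obtain ⟨Binv, hBinvdef⟩ : ∃ x : ℝ, x = C₃ * Real.exp θ / b := ⟨_, rfl⟩
  have hBinv0 : 0 < Binv := by
    rw [hBinvdef]; exact div_pos (mul_pos hC₃ (Real.exp_pos _)) hbpos
  have hBinv : ∀ x : M, ‖(((A x)⁻¹ : GL (Fin d) ℝ) : Matrix (Fin d) (Fin d) ℝ)‖ ≤ Binv := by
    intro x
    have hc1 : cocycle (⇑f) A 1 x = A x := by simp [cocycle]
    have h1 := hFB x 1
    rw [hc1] at h1
    rw [Nat.cast_one, mul_one] at h1
    have h2 : b * ‖(((A x)⁻¹ : GL (Fin d) ℝ) : Matrix (Fin d) (Fin d) ℝ)‖ ≤ C₃ * Real.exp θ :=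
      le_trans (mul_le_mul_of_nonneg_right (hb x) (hgn _)) h1
    rw [hBinvdef, le_div_iff₀ hbpos]
    linarith [(mul_comm b ‖(((A x)⁻¹ : GL (Fin d) ℝ) : Matrix (Fin d) (Fin d) ℝ)‖ : _)]
  -- Lipschitz estimate for x ↦ (A x)⁻¹
  have hΔ : ∀ x z : M,
      ‖(((A z)⁻¹ : GL (Fin d) ℝ) : Matrix (Fin d) (Fin d) ℝ) -
        (((A x)⁻¹ : GL (Fin d) ℝ) : Matrix (Fin d) (Fin d) ℝ)‖ ≤ Binv ^ 2 * K * dist x z := by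
    intro x z
    have hid : (((A z)⁻¹ : GL (Fin d) ℝ) : Matrix (Fin d) (Fin d) ℝ) *
        (((A x : Matrix (Fin d) (Fin d) ℝ)) - ((A z : Matrix (Fin d) (Fin d) ℝ))) *
        (((A x)⁻¹ : GL (Fin d) ℝ) : Matrix (Fin d) (Fin d) ℝ)
        = (((A z)⁻¹ : GL (Fin d) ℝ) : Matrix (Fin d) (Fin d) ℝ) -
          (((A x)⁻¹ : GL (Fin d) ℝ) : Matrix (Fin d) (Fin d) ℝ) := by
      rw [mul_sub, sub_mul, mul_assoc, Units.mul_inv, mul_one, Units.inv_mul, one_mul]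
    have hlip : ‖((A x : Matrix (Fin d) (Fin d) ℝ)) - ((A z : Matrix (Fin d) (Fin d) ℝ))‖ ≤
        (K : ℝ) * dist x z := by
      rw [← dist_eq_norm]
      exact hA.dist_le_mul x z
    calc ‖(((A z)⁻¹ : GL (Fin d) ℝ) : Matrix (Fin d) (Fin d) ℝ) -
          (((A x)⁻¹ : GL (Fin d) ℝ) : Matrix (Fin d) (Fin d) ℝ)‖
        = ‖(((A z)⁻¹ : GL (Fin d) ℝ) : Matrix (Fin d) (Fin d) ℝ) *
            (((A x : Matrix (Fin d) (Fin d) ℝ)) - ((A z : Matrix (Fin d) (Fin d) ℝ))) *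
            (((A x)⁻¹ : GL (Fin d) ℝ) : Matrix (Fin d) (Fin d) ℝ)‖ := by rw [hid]
      _ ≤ ‖(((A z)⁻¹ : GL (Fin d) ℝ) : Matrix (Fin d) (Fin d) ℝ) *
            (((A x : Matrix (Fin d) (Fin d) ℝ)) - ((A z : Matrix (Fin d) (Fin d) ℝ)))‖ *
            ‖(((A x)⁻¹ : GL (Fin d) ℝ) : Matrix (Fin d) (Fin d) ℝ)‖ := norm_mul_le _ _
      _ ≤ (‖(((A z)⁻¹ : GL (Fin d) ℝ) : Matrix (Fin d) (Fin d) ℝ)‖ *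
            ‖((A x : Matrix (Fin d) (Fin d) ℝ)) - ((A z : Matrix (Fin d) (Fin d) ℝ))‖) *
            ‖(((A x)⁻¹ : GL (Fin d) ℝ) : Matrix (Fin d) (Fin d) ℝ)‖ :=
          mul_le_mul_of_nonneg_right (norm_mul_le _ _) (norm_nonneg _)
      _ ≤ (Binv * ((K : ℝ) * dist x z)) * Binv := by
          apply mul_le_mul _ (hBinv x) (norm_nonneg _)
            (mul_nonneg hBinv0.le (mul_nonneg K.coe_nonneg dist_nonneg))
          exact mul_le_mul (hBinv z) hlip (norm_nonneg _) hBinv0.le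
      _ = Binv ^ 2 * K * dist x z := by ring
  -- diameter bound
  obtain ⟨Dm, hDm0⟩ := Metric.isBounded_iff.mp (isCompact_univ (X := M)).isBounded
  have hDm : ∀ x z : M, dist x z ≤ Dm := fun x z => hDm0 trivial trivial
  have hDmnn : 0 ≤ Dm := le_trans dist_nonneg (hDm hM.some hM.some)
  -- constants
  obtain ⟨r, hrdef⟩ : ∃ x : ℝ, x = Real.exp (-(θ + δ)) := ⟨_, rfl⟩
  have hr0 : 0 < r := by rw [hrdef]; exact Real.exp_pos _
  have hr1 : r < 1 := by
    rw [hrdef, ← Real.exp_zero]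
    exact Real.exp_lt_exp.mpr (by linarith)
  obtain ⟨a, hadef⟩ : ∃ x : ℝ, x = Binv ^ 2 * (K : ℝ) * C₅ * Dm := ⟨_, rfl⟩
  have ha0 : 0 ≤ a := by
    rw [hadef]
    exact mul_nonneg (mul_nonneg (mul_nonneg (sq_nonneg _) K.coe_nonneg) hC₅.le) hDmnn
  obtain ⟨c', hc'def⟩ : ∃ x : ℝ, x = C₃ * B * a * Real.exp (-θ) := ⟨_, rfl⟩
  have hc'0 : 0 ≤ c' := by
    rw [hc'def]
    exact mul_nonneg (mul_nonneg (mul_nonneg hC₃.le hB0) ha0) (Real.exp_pos _).le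
  obtain ⟨Q, hQdef⟩ : ∃ Q : ℕ → ℝ, Q = fun m => ∏ k ∈ Finset.range m, (1 + c' * r ^ (k + 1)) :=
    ⟨_, rfl⟩
  have hfact : ∀ k : ℕ, (0:ℝ) ≤ 1 + c' * r ^ (k + 1) := by
    intro k
    have := mul_nonneg hc'0 (pow_nonneg hr0.le (k + 1))
    linarith
  have hQnn : ∀ m, 0 ≤ Q m := by
    intro m; rw [hQdef]
    exact Finset.prod_nonneg fun k _ => hfact k
  have hQid : ∀ m, Q m = 1 + ∑ k ∈ Finset.range m, c' * r ^ (k + 1) * Q k := by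
    intro m
    induction m with
    | zero => simp [hQdef]
    | succ m ih =>
      have h1 : Q (m + 1) = Q m * (1 + c' * r ^ (m + 1)) := by
        rw [hQdef]
        exact Finset.prod_range_succ _ m
      rw [h1, Finset.sum_range_succ, ih]
      ring
  have hgeom : ∀ m, ∑ k ∈ Finset.range m, r ^ k ≤ 1 / (1 - r) := by
    intro m
    induction m with
    | zero =>
      simp only [Finset.range_zero, Finset.sum_empty]
      exact div_nonneg zero_le_one (by linarith)
    | succ m ih =>
      have hs : ∑ k ∈ Finset.range (m+1), r ^ k = r * (∑ k ∈ Finset.range m, r ^ k) + 1 := by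
        rw [Finset.sum_range_succ', Finset.mul_sum, pow_zero]
        congr 1
        exact Finset.sum_congr rfl fun i _ => by ring
      rw [hs]
      have h2 : r * ∑ k ∈ Finset.range m, r ^ k ≤ r * (1 / (1 - r)) :=
        mul_le_mul_of_nonneg_left ih hr0.le
      have h1r : (1:ℝ) - r ≠ 0 := ne_of_gt (by linarith)
      have h3 : r * (1 / (1 - r)) + 1 = 1 / (1 - r) := by
        field_simp
        ring
      linarith
  have hQle : ∀ m, Q m ≤ Real.exp (c' * (1 / (1 - r))) := by
    intro m
    have h1 : Q m ≤ ∏ k ∈ Finset.range m, Real.exp (c' * r ^ (k + 1)) := by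
      rw [hQdef]
      apply Finset.prod_le_prod (fun k _ => hfact k)
      intro k _
      linarith [Real.add_one_le_exp (c' * r ^ (k + 1))]
    rw [← Real.exp_sum] at h1
    apply h1.trans
    apply Real.exp_le_exp.mpr
    calc ∑ k ∈ Finset.range m, c' * r ^ (k + 1)
        = c' * ∑ k ∈ Finset.range m, r ^ (k + 1) := by rw [Finset.mul_sum]
      _ ≤ c' * (1 / (1 - r)) := by
          apply mul_le_mul_of_nonneg_left _ hc'0
          calc ∑ k ∈ Finset.range m, r ^ (k + 1)
              ≤ ∑ k ∈ Finset.range m, r ^ k :=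
                Finset.sum_le_sum fun k _ => pow_le_pow_of_le_one hr0.le hr1.le (by omega)
            _ ≤ 1 / (1 - r) := hgeom m
  refine ⟨C₃ * Real.exp (c' * (1 / (1 - r))), mul_pos hC₃ (Real.exp_pos _), ?_⟩
  intro n y p h j hjn
  -- f^[n] ∘ f.symm^[n] = id
  have hfs : ∀ (k : ℕ) (z : M), (⇑f)^[k] ((⇑f.symm)^[k] z) = z := by
    intro k
    induction k with
    | zero => intro z; simp
    | succ k ih =>
      intro z
      rw [Function.iterate_succ_apply (⇑f.symm), Function.iterate_succ_apply' (⇑f)]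
      rw [ih (f.symm z)]
      exact f.apply_symm_apply z
  -- distance estimate along the orbit
  have hdist : ∀ k, k < n → dist ((⇑f)^[k] y) ((⇑f)^[k] p) ≤ C₅ * (r ^ (n - k) * Dm) := by
    intro k hk
    have hk2 : n + k ≤ 2 * n := by omega
    have hpt : ∀ z : M, (⇑f)^[n + k] ((⇑f.symm)^[n] z) = (⇑f)^[k] z := by
      intro z
      rw [add_comm, Function.iterate_add_apply, hfs n z]
    have h1 := h (n + k) hk2
    rw [hpt y, hpt p] at h1
    have hmin : min (n + k) (2 * n - (n + k)) = n - k := by omega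
    rw [hmin] at h1
    have hexp : Real.exp (-(θ + δ) * ((n - k : ℕ) : ℝ)) = r ^ (n - k) := by
      rw [hrdef, ← Real.exp_nat_mul]
      congr 1
      ring
    rw [hexp] at h1
    calc dist ((⇑f)^[k] y) ((⇑f)^[k] p)
        ≤ C₅ * r ^ (n - k) * dist ((⇑f.symm)^[n] y) ((⇑f)^[n] y) := h1
      _ ≤ C₅ * r ^ (n - k) * Dm := by
          exact mul_le_mul_of_nonneg_left (hDm _ _)
            (mul_nonneg hC₅.le (pow_nonneg hr0.le _))
      _ = C₅ * (r ^ (n - k) * Dm) := by ring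
  -- main induction
  have key : ∀ m j, j + m = n →
      ‖((cocycle (⇑f) A m ((⇑f)^[j] y) : GL (Fin d) ℝ) : Matrix (Fin d) (Fin d) ℝ)‖ *
        ‖(((cocycle (⇑f) A m ((⇑f)^[j] p))⁻¹ : GL (Fin d) ℝ) : Matrix (Fin d) (Fin d) ℝ)‖ ≤
      C₃ * Q m * Real.exp (θ * m) := by
    intro m
    induction m using Nat.strong_induction_on with
    | _ m IH =>
      intro j hj
      set Yj := (⇑f)^[j] y with hYjdef
      set Pj := (⇑f)^[j] p with hPjdef
      have h1 : ‖(((cocycle (⇑f) A m Pj)⁻¹ : GL (Fin d) ℝ) : Matrix (Fin d) (Fin d) ℝ)‖ ≤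
          ‖(((cocycle (⇑f) A m Yj)⁻¹ : GL (Fin d) ℝ) : Matrix (Fin d) (Fin d) ℝ)‖ +
          ‖(((cocycle (⇑f) A m Pj)⁻¹ : GL (Fin d) ℝ) : Matrix (Fin d) (Fin d) ℝ) -
            (((cocycle (⇑f) A m Yj)⁻¹ : GL (Fin d) ℝ) : Matrix (Fin d) (Fin d) ℝ)‖ := by
        have := norm_sub_norm_le
          ((((cocycle (⇑f) A m Pj)⁻¹ : GL (Fin d) ℝ) : Matrix (Fin d) (Fin d) ℝ))
          ((((cocycle (⇑f) A m Yj)⁻¹ : GL (Fin d) ℝ) : Matrix (Fin d) (Fin d) ℝ))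
        linarith
      have h2 : ‖(((cocycle (⇑f) A m Pj)⁻¹ : GL (Fin d) ℝ) : Matrix (Fin d) (Fin d) ℝ) -
            (((cocycle (⇑f) A m Yj)⁻¹ : GL (Fin d) ℝ) : Matrix (Fin d) (Fin d) ℝ)‖ ≤
          ∑ i ∈ Finset.range m,
            ‖(((cocycle (⇑f) A i Yj)⁻¹ : GL (Fin d) ℝ) : Matrix (Fin d) (Fin d) ℝ)‖ *
            ‖(((A ((⇑f)^[i] Pj))⁻¹ : GL (Fin d) ℝ) : Matrix (Fin d) (Fin d) ℝ) -
              (((A ((⇑f)^[i] Yj))⁻¹ : GL (Fin d) ℝ) : Matrix (Fin d) (Fin d) ℝ)‖ *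
            ‖(((cocycle (⇑f) A (m - 1 - i) ((⇑f)^[i+1] Pj))⁻¹ : GL (Fin d) ℝ) :
                Matrix (Fin d) (Fin d) ℝ)‖ := by
        rw [telescope (⇑f) A m Yj Pj]
        refine (norm_sum_le _ _).trans (Finset.sum_le_sum ?_)
        intro i _
        exact (norm_mul_le _ _).trans
          (mul_le_mul_of_nonneg_right (norm_mul_le _ _) (norm_nonneg _))
      have hterm : ∀ i ∈ Finset.range m,
          ‖((cocycle (⇑f) A m Yj : GL (Fin d) ℝ) : Matrix (Fin d) (Fin d) ℝ)‖ *
            (‖(((cocycle (⇑f) A i Yj)⁻¹ : GL (Fin d) ℝ) : Matrix (Fin d) (Fin d) ℝ)‖ *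
            ‖(((A ((⇑f)^[i] Pj))⁻¹ : GL (Fin d) ℝ) : Matrix (Fin d) (Fin d) ℝ) -
              (((A ((⇑f)^[i] Yj))⁻¹ : GL (Fin d) ℝ) : Matrix (Fin d) (Fin d) ℝ)‖ *
            ‖(((cocycle (⇑f) A (m - 1 - i) ((⇑f)^[i+1] Pj))⁻¹ : GL (Fin d) ℝ) :
                Matrix (Fin d) (Fin d) ℝ)‖) ≤
          Real.exp (θ * m) * (C₃ * (c' * r ^ ((m - 1 - i) + 1) * Q (m - 1 - i))) := by
        intro i hi
        have him : i < m := Finset.mem_range.mp hi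
        set k := m - 1 - i with hkdef
        have hk : i + k + 1 = m := by omega
        have hsplit : ‖((cocycle (⇑f) A m Yj : GL (Fin d) ℝ) : Matrix (Fin d) (Fin d) ℝ)‖ ≤
            ‖((cocycle (⇑f) A k ((⇑f)^[i+1] Yj) : GL (Fin d) ℝ) : Matrix (Fin d) (Fin d) ℝ)‖ * B *
            ‖((cocycle (⇑f) A i Yj : GL (Fin d) ℝ) : Matrix (Fin d) (Fin d) ℝ)‖ := by
          have e1 : cocycle (⇑f) A m Yj =
              cocycle (⇑f) A (k+1) ((⇑f)^[i] Yj) * cocycle (⇑f) A i Yj := by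
            conv_lhs => rw [show m = (k+1) + i by omega]
            exact cocycle_add (⇑f) A i (k+1) Yj
          have e2 : cocycle (⇑f) A (k+1) ((⇑f)^[i] Yj) =
              cocycle (⇑f) A k ((⇑f)^[i+1] Yj) * A ((⇑f)^[i] Yj) := by
            rw [cocycle_succ', Function.iterate_succ_apply']
          rw [e1, e2, Units.val_mul, Units.val_mul]
          calc ‖((cocycle (⇑f) A k ((⇑f)^[i+1] Yj) : GL (Fin d) ℝ) : Matrix (Fin d) (Fin d) ℝ) *
                ((A ((⇑f)^[i] Yj) : GL (Fin d) ℝ) : Matrix (Fin d) (Fin d) ℝ) *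
                ((cocycle (⇑f) A i Yj : GL (Fin d) ℝ) : Matrix (Fin d) (Fin d) ℝ)‖
              ≤ ‖((cocycle (⇑f) A k ((⇑f)^[i+1] Yj) : GL (Fin d) ℝ) : Matrix (Fin d) (Fin d) ℝ) *
                ((A ((⇑f)^[i] Yj) : GL (Fin d) ℝ) : Matrix (Fin d) (Fin d) ℝ)‖ *
                ‖((cocycle (⇑f) A i Yj : GL (Fin d) ℝ) : Matrix (Fin d) (Fin d) ℝ)‖ :=
                norm_mul_le _ _
            _ ≤ ‖((cocycle (⇑f) A k ((⇑f)^[i+1] Yj) : GL (Fin d) ℝ) : Matrix (Fin d) (Fin d) ℝ)‖ *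
                ‖((A ((⇑f)^[i] Yj) : GL (Fin d) ℝ) : Matrix (Fin d) (Fin d) ℝ)‖ *
                ‖((cocycle (⇑f) A i Yj : GL (Fin d) ℝ) : Matrix (Fin d) (Fin d) ℝ)‖ :=
                mul_le_mul_of_nonneg_right (norm_mul_le _ _) (norm_nonneg _)
            _ ≤ ‖((cocycle (⇑f) A k ((⇑f)^[i+1] Yj) : GL (Fin d) ℝ) : Matrix (Fin d) (Fin d) ℝ)‖ *
                B *
                ‖((cocycle (⇑f) A i Yj : GL (Fin d) ℝ) : Matrix (Fin d) (Fin d) ℝ)‖ :=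
                mul_le_mul_of_nonneg_right
                  (mul_le_mul_of_nonneg_left (hB _) (norm_nonneg _)) (norm_nonneg _)
        have hη : ‖(((A ((⇑f)^[i] Pj))⁻¹ : GL (Fin d) ℝ) : Matrix (Fin d) (Fin d) ℝ) -
              (((A ((⇑f)^[i] Yj))⁻¹ : GL (Fin d) ℝ) : Matrix (Fin d) (Fin d) ℝ)‖ ≤
            a * r ^ (k + 1) := by
          have hd1 : dist ((⇑f)^[i] Yj) ((⇑f)^[i] Pj) =
              dist ((⇑f)^[i + j] y) ((⇑f)^[i + j] p) := by
            rw [hYjdef, hPjdef, ← Function.iterate_add_apply, ← Function.iterate_add_apply]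
          have hnk : n - (i + j) = k + 1 := by omega
          have hd2 := hdist (i + j) (by omega)
          rw [hnk] at hd2
          calc ‖(((A ((⇑f)^[i] Pj))⁻¹ : GL (Fin d) ℝ) : Matrix (Fin d) (Fin d) ℝ) -
                (((A ((⇑f)^[i] Yj))⁻¹ : GL (Fin d) ℝ) : Matrix (Fin d) (Fin d) ℝ)‖
              ≤ Binv ^ 2 * K * dist ((⇑f)^[i] Yj) ((⇑f)^[i] Pj) := hΔ _ _
            _ = Binv ^ 2 * K * dist ((⇑f)^[i + j] y) ((⇑f)^[i + j] p) := by rw [hd1]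
            _ ≤ Binv ^ 2 * K * (C₅ * (r ^ (k + 1) * Dm)) :=
                mul_le_mul_of_nonneg_left hd2 (mul_nonneg (sq_nonneg _) K.coe_nonneg)
            _ = a * r ^ (k + 1) := by rw [hadef]; ring
        have hIHk :
            ‖((cocycle (⇑f) A k ((⇑f)^[i+1] Yj) : GL (Fin d) ℝ) : Matrix (Fin d) (Fin d) ℝ)‖ *
            ‖(((cocycle (⇑f) A k ((⇑f)^[i+1] Pj))⁻¹ : GL (Fin d) ℝ) : Matrix (Fin d) (Fin d) ℝ)‖ ≤
            C₃ * Q k * Real.exp (θ * k) := by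
          have hIH := IH k (by omega) (i + 1 + j) (by omega)
          rw [Function.iterate_add_apply (⇑f) (i+1) j y,
            Function.iterate_add_apply (⇑f) (i+1) j p, ← hYjdef, ← hPjdef] at hIH
          exact hIH
        have hexp2 : Real.exp (θ * i) * Real.exp (θ * k) = Real.exp (θ * m) * Real.exp (-θ) := by
          rw [← Real.exp_add, ← Real.exp_add]
          congr 1
          have hm' : (m : ℝ) = (i : ℝ) + (k : ℝ) + 1 := by exact_mod_cast hk.symm
          rw [hm']; ring
        calc ‖((cocycle (⇑f) A m Yj : GL (Fin d) ℝ) : Matrix (Fin d) (Fin d) ℝ)‖ *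
              (‖(((cocycle (⇑f) A i Yj)⁻¹ : GL (Fin d) ℝ) : Matrix (Fin d) (Fin d) ℝ)‖ *
              ‖(((A ((⇑f)^[i] Pj))⁻¹ : GL (Fin d) ℝ) : Matrix (Fin d) (Fin d) ℝ) -
                (((A ((⇑f)^[i] Yj))⁻¹ : GL (Fin d) ℝ) : Matrix (Fin d) (Fin d) ℝ)‖ *
              ‖(((cocycle (⇑f) A k ((⇑f)^[i+1] Pj))⁻¹ : GL (Fin d) ℝ) :
                  Matrix (Fin d) (Fin d) ℝ)‖)
            ≤ (‖((cocycle (⇑f) A k ((⇑f)^[i+1] Yj) : GL (Fin d) ℝ) : Matrix (Fin d) (Fin d) ℝ)‖ *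
                B *
                ‖((cocycle (⇑f) A i Yj : GL (Fin d) ℝ) : Matrix (Fin d) (Fin d) ℝ)‖) *
              (‖(((cocycle (⇑f) A i Yj)⁻¹ : GL (Fin d) ℝ) : Matrix (Fin d) (Fin d) ℝ)‖ *
                (a * r ^ (k + 1)) *
              ‖(((cocycle (⇑f) A k ((⇑f)^[i+1] Pj))⁻¹ : GL (Fin d) ℝ) :
                  Matrix (Fin d) (Fin d) ℝ)‖) := by
              apply mul_le_mul hsplit ?_ ?_ ?_
              · exact mul_le_mul_of_nonneg_right
                  (mul_le_mul_of_nonneg_left hη (norm_nonneg _)) (norm_nonneg _)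
              · exact mul_nonneg (mul_nonneg (norm_nonneg _) (norm_nonneg _)) (norm_nonneg _)
              · exact mul_nonneg (mul_nonneg (norm_nonneg _) hB0) (norm_nonneg _)
          _ = (B * (a * r ^ (k + 1))) *
              ((‖((cocycle (⇑f) A i Yj : GL (Fin d) ℝ) : Matrix (Fin d) (Fin d) ℝ)‖ *
                ‖(((cocycle (⇑f) A i Yj)⁻¹ : GL (Fin d) ℝ) : Matrix (Fin d) (Fin d) ℝ)‖) *
               (‖((cocycle (⇑f) A k ((⇑f)^[i+1] Yj) : GL (Fin d) ℝ) :
                    Matrix (Fin d) (Fin d) ℝ)‖ *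
                ‖(((cocycle (⇑f) A k ((⇑f)^[i+1] Pj))⁻¹ : GL (Fin d) ℝ) :
                    Matrix (Fin d) (Fin d) ℝ)‖)) := by ring
          _ ≤ (B * (a * r ^ (k + 1))) *
              ((C₃ * Real.exp (θ * i)) * (C₃ * Q k * Real.exp (θ * k))) := by
              apply mul_le_mul_of_nonneg_left _
                (mul_nonneg hB0 (mul_nonneg ha0 (pow_nonneg hr0.le _)))
              exact mul_le_mul (hFB Yj i) hIHk
                (mul_nonneg (norm_nonneg _) (norm_nonneg _))
                (mul_nonneg hC₃.le (Real.exp_pos _).le)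
          _ = Real.exp (θ * m) * (C₃ * (c' * r ^ (k + 1) * Q k)) := by
              rw [hc'def]
              have : (B * (a * r ^ (k + 1))) *
                  ((C₃ * Real.exp (θ * i)) * (C₃ * Q k * Real.exp (θ * k))) =
                  (Real.exp (θ * i) * Real.exp (θ * k)) *
                  (B * a * r ^ (k + 1) * C₃ * C₃ * Q k) := by ring
              rw [this, hexp2]
              ring
      calc ‖((cocycle (⇑f) A m Yj : GL (Fin d) ℝ) : Matrix (Fin d) (Fin d) ℝ)‖ *
            ‖(((cocycle (⇑f) A m Pj)⁻¹ : GL (Fin d) ℝ) : Matrix (Fin d) (Fin d) ℝ)‖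
          ≤ ‖((cocycle (⇑f) A m Yj : GL (Fin d) ℝ) : Matrix (Fin d) (Fin d) ℝ)‖ *
            (‖(((cocycle (⇑f) A m Yj)⁻¹ : GL (Fin d) ℝ) : Matrix (Fin d) (Fin d) ℝ)‖ +
              ∑ i ∈ Finset.range m,
              ‖(((cocycle (⇑f) A i Yj)⁻¹ : GL (Fin d) ℝ) : Matrix (Fin d) (Fin d) ℝ)‖ *
              ‖(((A ((⇑f)^[i] Pj))⁻¹ : GL (Fin d) ℝ) : Matrix (Fin d) (Fin d) ℝ) -
                (((A ((⇑f)^[i] Yj))⁻¹ : GL (Fin d) ℝ) : Matrix (Fin d) (Fin d) ℝ)‖ *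
              ‖(((cocycle (⇑f) A (m - 1 - i) ((⇑f)^[i+1] Pj))⁻¹ : GL (Fin d) ℝ) :
                  Matrix (Fin d) (Fin d) ℝ)‖) := by
            apply mul_le_mul_of_nonneg_left _ (norm_nonneg _)
            exact h1.trans (add_le_add (le_refl _) h2)
        _ = ‖((cocycle (⇑f) A m Yj : GL (Fin d) ℝ) : Matrix (Fin d) (Fin d) ℝ)‖ *
            ‖(((cocycle (⇑f) A m Yj)⁻¹ : GL (Fin d) ℝ) : Matrix (Fin d) (Fin d) ℝ)‖ +
            ∑ i ∈ Finset.range m,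
              ‖((cocycle (⇑f) A m Yj : GL (Fin d) ℝ) : Matrix (Fin d) (Fin d) ℝ)‖ *
              (‖(((cocycle (⇑f) A i Yj)⁻¹ : GL (Fin d) ℝ) : Matrix (Fin d) (Fin d) ℝ)‖ *
              ‖(((A ((⇑f)^[i] Pj))⁻¹ : GL (Fin d) ℝ) : Matrix (Fin d) (Fin d) ℝ) -
                (((A ((⇑f)^[i] Yj))⁻¹ : GL (Fin d) ℝ) : Matrix (Fin d) (Fin d) ℝ)‖ *
              ‖(((cocycle (⇑f) A (m - 1 - i) ((⇑f)^[i+1] Pj))⁻¹ : GL (Fin d) ℝ) :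
                  Matrix (Fin d) (Fin d) ℝ)‖) := by
            rw [mul_add, Finset.mul_sum]
        _ ≤ C₃ * Real.exp (θ * m) +
            ∑ i ∈ Finset.range m,
              Real.exp (θ * m) * (C₃ * (c' * r ^ ((m - 1 - i) + 1) * Q (m - 1 - i))) :=
            add_le_add (hFB Yj m) (Finset.sum_le_sum hterm)
        _ = C₃ * Real.exp (θ * m) +
            Real.exp (θ * m) * C₃ * ∑ k ∈ Finset.range m, c' * r ^ (k + 1) * Q k := by
            congr 1
            have hrefl : ∑ i ∈ Finset.range m,
                (fun k => c' * r ^ (k + 1) * Q k) (m - 1 - i) =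
                ∑ k ∈ Finset.range m, c' * r ^ (k + 1) * Q k :=
              Finset.sum_range_reflect (fun k => c' * r ^ (k + 1) * Q k) m
            calc ∑ i ∈ Finset.range m,
                  Real.exp (θ * m) * (C₃ * (c' * r ^ ((m - 1 - i) + 1) * Q (m - 1 - i)))
                = Real.exp (θ * m) * C₃ *
                  ∑ i ∈ Finset.range m, (fun k => c' * r ^ (k + 1) * Q k) (m - 1 - i) := by
                  rw [Finset.mul_sum]
                  exact Finset.sum_congr rfl fun i _ => by ring
              _ = Real.exp (θ * m) * C₃ * ∑ k ∈ Finset.range m, c' * r ^ (k + 1) * Q k := by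
                  rw [hrefl]
        _ = C₃ * Q m * Real.exp (θ * m) := by
            rw [hQid m]
            ring
  have hkey := key (n - j) j (by omega)
  refine hkey.trans ?_
  apply mul_le_mul_of_nonneg_right _ (Real.exp_pos _).le
  exact mul_le_mul_of_nonneg_left (hQle _) hC₃.le
end
end
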